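/- arXiv:1803.02182 — 7 statements merged into one kernel-verified Lean document; each statement's English description precedes it below -/
import Mathlib

section
/- Let Q ∈ ℝ^{n×n} be symmetric positive definite, let S ∈ ℝ^{r×n} have full row rank with r < n, and let T_x ∈ ℝ^{n×n} and T_ν ∈ ℝ^{r×r} be diagonal positive definite matrices. Then the saddle-point system matrix A = [[−T_x⁻¹Q, −T_x⁻¹Sᵀ], [T_ν⁻¹S, 0]] ∈ ℝ^{(n+r)×(n+r)} is Hurwitz, i.e., every complex eigenvalue of A has strictly negative real part. -/
open Matrix

namespace SaddleAux

/-- Real part of a complexified mulVec entry. -/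
lemma mulVec_map_re {m k : ℕ} (M : Matrix (Fin m) (Fin k) ℝ) (x : Fin k → ℂ) (i : Fin m) :
    ((M.map Complex.ofReal *ᵥ x) i).re = (M *ᵥ fun j => (x j).re) i := by
  simp [mulVec, dotProduct, Complex.re_sum, Complex.mul_re, Matrix.map_apply]

lemma mulVec_map_im {m k : ℕ} (M : Matrix (Fin m) (Fin k) ℝ) (x : Fin k → ℂ) (i : Fin m) :
    ((M.map Complex.ofReal *ᵥ x) i).im = (M *ᵥ fun j => (x j).im) i := by
  simp [mulVec, dotProduct, Complex.im_sum, Complex.mul_im, Matrix.map_apply]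

/-- Real part of the complexified quadratic form. -/
lemma quad_re {m : ℕ} (M : Matrix (Fin m) (Fin m) ℝ) (x : Fin m → ℂ) :
    (star x ⬝ᵥ (M.map Complex.ofReal *ᵥ x)).re =
      (fun i => (x i).re) ⬝ᵥ (M *ᵥ fun i => (x i).re) +
      (fun i => (x i).im) ⬝ᵥ (M *ᵥ fun i => (x i).im) := by
  have h : ∀ i, (star x i * (M.map Complex.ofReal *ᵥ x) i).re =
      (x i).re * (M *ᵥ fun j => (x j).re) i + (x i).im * (M *ᵥ fun j => (x j).im) i := by
    intro i
    rw [Complex.mul_re]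
    simp [Pi.star_apply, Complex.star_def, mulVec_map_re M x i, mulVec_map_im M x i]
  rw [dotProduct, Complex.re_sum]
  simp_rw [h]
  rw [Finset.sum_add_distrib, dotProduct, dotProduct]

lemma quad_im {m : ℕ} (M : Matrix (Fin m) (Fin m) ℝ) (x : Fin m → ℂ) :
    (star x ⬝ᵥ (M.map Complex.ofReal *ᵥ x)).im =
      (fun i => (x i).re) ⬝ᵥ (M *ᵥ fun i => (x i).im) -
      (fun i => (x i).im) ⬝ᵥ (M *ᵥ fun i => (x i).re) := by
  have h : ∀ i, (star x i * (M.map Complex.ofReal *ᵥ x) i).im =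
      (x i).re * (M *ᵥ fun j => (x j).im) i - (x i).im * (M *ᵥ fun j => (x j).re) i := by
    intro i
    rw [Complex.mul_im]
    simp [Pi.star_apply, Complex.star_def, mulVec_map_re M x i, mulVec_map_im M x i]
    ring
  rw [dotProduct, Complex.im_sum]
  simp_rw [h]
  rw [Finset.sum_sub_distrib, dotProduct, dotProduct]

/-- symmetric matrices give symmetric real bilinear forms. -/
lemma sym_dot {m : ℕ} {M : Matrix (Fin m) (Fin m) ℝ} (hM : Mᵀ = M) (u v : Fin m → ℝ) :
    u ⬝ᵥ (M *ᵥ v) = v ⬝ᵥ (M *ᵥ u) := by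
  rw [Matrix.dotProduct_mulVec, ← Matrix.mulVec_transpose, hM, dotProduct_comm]

lemma transpose_eq {m : ℕ} {M : Matrix (Fin m) (Fin m) ℝ} (hM : M.IsHermitian) : Mᵀ = M := by
  have := hM.eq
  ext i j
  have := congrFun (congrFun this i) j
  simpa [Matrix.conjTranspose_apply] using this

/-- for a real symmetric matrix, the complexified quadratic form is real. -/
lemma quad_im_zero {m : ℕ} {M : Matrix (Fin m) (Fin m) ℝ} (hM : M.IsHermitian) (x : Fin m → ℂ) :
    (star x ⬝ᵥ (M.map Complex.ofReal *ᵥ x)).im = 0 := by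
  rw [quad_im, sym_dot (transpose_eq hM), sub_self]

lemma quad_re_nonneg {m : ℕ} {M : Matrix (Fin m) (Fin m) ℝ} (hM : M.PosSemidef) (x : Fin m → ℂ) :
    0 ≤ (star x ⬝ᵥ (M.map Complex.ofReal *ᵥ x)).re := by
  rw [quad_re]
  have h1 := hM.dotProduct_mulVec_nonneg (fun i => (x i).re)
  have h2 := hM.dotProduct_mulVec_nonneg (fun i => (x i).im)
  simp only [star_trivial] at h1 h2
  linarith

lemma quad_re_pos {m : ℕ} {M : Matrix (Fin m) (Fin m) ℝ} (hM : M.PosDef) {x : Fin m → ℂ}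
    (hx : x ≠ 0) : 0 < (star x ⬝ᵥ (M.map Complex.ofReal *ᵥ x)).re := by
  rw [quad_re]
  have hcase : (fun i => (x i).re) ≠ 0 ∨ (fun i => (x i).im) ≠ 0 := by
    by_contra hc
    push_neg at hc
    apply hx
    funext i
    have h1 := congrFun hc.1 i
    have h2 := congrFun hc.2 i
    simp only [Pi.zero_apply] at h1 h2 ⊢
    exact Complex.ext h1 h2
  have hsd := hM.posSemidef
  rcases hcase with h | h
  · have hp := hM.dotProduct_mulVec_pos h
    have hn := hsd.dotProduct_mulVec_nonneg (fun i => (x i).im)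
    simp only [star_trivial] at hp hn
    linarith
  · have hp := hM.dotProduct_mulVec_pos h
    have hn := hsd.dotProduct_mulVec_nonneg (fun i => (x i).re)
    simp only [star_trivial] at hp hn
    linarith

/-- Full row rank: the complexified transpose has trivial kernel. -/
lemma transpose_ker {r n : ℕ} (S : Matrix (Fin r) (Fin n) ℝ) (hS : S.rank = r)
    (ν : Fin r → ℂ) (h : Sᵀ.map Complex.ofReal *ᵥ ν = 0) : ν = 0 := by
  -- real kernel is trivial
  have hreal : ∀ w : Fin r → ℝ, Sᵀ *ᵥ w = 0 → w = 0 := by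
    intro w hw
    have hrank : Sᵀ.rank = r := by rw [Matrix.rank_transpose]; exact hS
    have hfr : Module.finrank ℝ (LinearMap.range (Sᵀ.mulVecLin)) = r := hrank
    have hrn := LinearMap.finrank_range_add_finrank_ker (Sᵀ.mulVecLin)
    rw [hfr] at hrn
    have hdom : Module.finrank ℝ (Fin r → ℝ) = r := by simp
    rw [hdom] at hrn
    have hker0 : Module.finrank ℝ (LinearMap.ker (Sᵀ.mulVecLin)) = 0 := by omega
    have hkerbot : LinearMap.ker (Sᵀ.mulVecLin) = ⊥ :=
      Submodule.finrank_eq_zero.mp hker0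
    have hwker : w ∈ LinearMap.ker (Sᵀ.mulVecLin) := by
      simp only [LinearMap.mem_ker, Matrix.mulVecLin_apply]
      exact hw
    rw [hkerbot] at hwker
    simpa using hwker
  have hre : (fun j => (ν j).re) = 0 := by
    apply hreal
    funext i
    have := congrFun h i
    simp only [Pi.zero_apply] at this ⊢
    rw [← mulVec_map_re Sᵀ ν i, this]
    simp
  have him : (fun j => (ν j).im) = 0 := by
    apply hreal
    funext i
    have := congrFun h i
    simp only [Pi.zero_apply] at this ⊢
    rw [← mulVec_map_im Sᵀ ν i, this]
    simp
  funext j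
  have h1 := congrFun hre j
  have h2 := congrFun him j
  simp only [Pi.zero_apply] at h1 h2 ⊢
  exact Complex.ext h1 h2

lemma mapC_mul {m k l : ℕ} (M : Matrix (Fin m) (Fin k) ℝ) (N : Matrix (Fin k) (Fin l) ℝ) :
    (M * N).map Complex.ofReal = M.map Complex.ofReal * N.map Complex.ofReal := by
  ext i j
  simp [Matrix.map_apply, Matrix.mul_apply]

lemma mapC_neg {m k : ℕ} (M : Matrix (Fin m) (Fin k) ℝ) :
    (-M).map Complex.ofReal = -(M.map Complex.ofReal) := by
  ext i j
  simp [Matrix.map_apply]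

lemma mapC_transpose {m k : ℕ} (M : Matrix (Fin m) (Fin k) ℝ) :
    (Mᵀ).map Complex.ofReal = (M.map Complex.ofReal)ᵀ := by
  ext i j
  simp [Matrix.map_apply]

lemma mapC_conjTranspose {m k : ℕ} (M : Matrix (Fin m) (Fin k) ℝ) :
    (M.map Complex.ofReal)ᴴ = (Mᵀ).map Complex.ofReal := by
  ext i j
  simp [Matrix.map_apply, Matrix.conjTranspose_apply]

end SaddleAux

open SaddleAux in
/-- The saddle-point system matrix
`A = [[−Tx⁻¹Q, −Tx⁻¹Sᵀ], [Tν⁻¹S, 0]]` is Hurwitz. -/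
theorem saddle_point_matrix_hurwitz
    (n r : ℕ) (hrn : r < n)
    (Q : Matrix (Fin n) (Fin n) ℝ) (hQ : Q.PosDef)
    (S : Matrix (Fin r) (Fin n) ℝ) (hS : S.rank = r)
    (Tx : Matrix (Fin n) (Fin n) ℝ) (hTxd : Tx.IsDiag) (hTx : Tx.PosDef)
    (Tν : Matrix (Fin r) (Fin r) ℝ) (hTνd : Tν.IsDiag) (hTν : Tν.PosDef) :
    ∀ μ ∈ spectrum ℂ
        ((Matrix.fromBlocks (-(Tx⁻¹ * Q)) (-(Tx⁻¹ * Sᵀ)) (Tν⁻¹ * S)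
          (0 : Matrix (Fin r) (Fin r) ℝ)).map Complex.ofReal),
      μ.re < 0 := by
  intro μ hμ
  set A : Matrix (Fin n ⊕ Fin r) (Fin n ⊕ Fin r) ℂ :=
    (Matrix.fromBlocks (-(Tx⁻¹ * Q)) (-(Tx⁻¹ * Sᵀ)) (Tν⁻¹ * S)
      (0 : Matrix (Fin r) (Fin r) ℝ)).map Complex.ofReal with hA
  rw [spectrum.mem_iff] at hμ
  -- get an eigenvector
  have hdet : (algebraMap ℂ (Matrix (Fin n ⊕ Fin r) (Fin n ⊕ Fin r) ℂ) μ - A).det = 0 := by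
    by_contra hd
    exact hμ ((Matrix.isUnit_iff_isUnit_det _).mpr (isUnit_iff_ne_zero.mpr hd))
  obtain ⟨v, hv0, hv⟩ := (Matrix.exists_mulVec_eq_zero_iff).mpr hdet
  have hAv : A *ᵥ v = μ • v := by
    have h1 : (algebraMap ℂ (Matrix (Fin n ⊕ Fin r) (Fin n ⊕ Fin r) ℂ) μ - A) *ᵥ v
        = μ • v - A *ᵥ v := by
      rw [Matrix.sub_mulVec]
      congr 1
      rw [Algebra.algebraMap_eq_smul_one, Matrix.smul_mulVec, Matrix.one_mulVec]
    rw [h1] at hv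
    exact (sub_eq_zero.mp hv).symm
  set x : Fin n → ℂ := fun i => v (Sum.inl i) with hx
  set ν' : Fin r → ℂ := fun j => v (Sum.inr j) with hν
  have hvel : v = Sum.elim x ν' := by funext i; cases i <;> rfl
  -- block equations
  have hblock : A *ᵥ v = Sum.elim
      ((-(Tx⁻¹ * Q)).map Complex.ofReal *ᵥ x + (-(Tx⁻¹ * Sᵀ)).map Complex.ofReal *ᵥ ν')
      ((Tν⁻¹ * S).map Complex.ofReal *ᵥ x +
        ((0 : Matrix (Fin r) (Fin r) ℝ).map Complex.ofReal) *ᵥ ν') := by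
    rw [hA, Matrix.fromBlocks_map]
    nth_rewrite 1 [hvel]
    rw [Matrix.fromBlocks_mulVec]
    simp
  have E1 : (-(Tx⁻¹ * Q)).map Complex.ofReal *ᵥ x + (-(Tx⁻¹ * Sᵀ)).map Complex.ofReal *ᵥ ν'
      = μ • x := by
    funext i
    have h := congrFun (hblock.symm.trans hAv) (Sum.inl i)
    simpa using h
  have E2 : (Tν⁻¹ * S).map Complex.ofReal *ᵥ x = μ • ν' := by
    funext j
    have h := congrFun (hblock.symm.trans hAv) (Sum.inr j)
    simpa [Matrix.map_zero, Matrix.mulVec_zero] using h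
  -- invertibility of Tx, Tν
  have hTxdet : IsUnit Tx.det := isUnit_iff_ne_zero.mpr (ne_of_gt hTx.det_pos)
  have hTνdet : IsUnit Tν.det := isUnit_iff_ne_zero.mpr (ne_of_gt hTν.det_pos)
  have hTxQ : Tx * (Tx⁻¹ * Q) = Q := by
    rw [← Matrix.mul_assoc, Matrix.mul_nonsing_inv _ hTxdet, Matrix.one_mul]
  have hTxS : Tx * (Tx⁻¹ * Sᵀ) = Sᵀ := by
    rw [← Matrix.mul_assoc, Matrix.mul_nonsing_inv _ hTxdet, Matrix.one_mul]
  have hTνS : Tν * (Tν⁻¹ * S) = S := by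
    rw [← Matrix.mul_assoc, Matrix.mul_nonsing_inv _ hTνdet, Matrix.one_mul]
  have m1 : Tx.map Complex.ofReal * ((-(Tx⁻¹ * Q)).map Complex.ofReal)
      = -(Q.map Complex.ofReal) := by
    rw [mapC_neg, Matrix.mul_neg, ← mapC_mul, hTxQ]
  have m2 : Tx.map Complex.ofReal * ((-(Tx⁻¹ * Sᵀ)).map Complex.ofReal)
      = -(Sᵀ.map Complex.ofReal) := by
    rw [mapC_neg, Matrix.mul_neg, ← mapC_mul, hTxS]
  have m3 : Tν.map Complex.ofReal * ((Tν⁻¹ * S).map Complex.ofReal)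
      = S.map Complex.ofReal := by
    rw [← mapC_mul, hTνS]
  have E1' : -(Q.map Complex.ofReal *ᵥ x) + -(Sᵀ.map Complex.ofReal *ᵥ ν')
      = μ • (Tx.map Complex.ofReal *ᵥ x) := by
    have h := congrArg (fun w => Tx.map Complex.ofReal *ᵥ w) E1
    simp only [Matrix.mulVec_add, Matrix.mulVec_mulVec, m1, m2, Matrix.neg_mulVec,
      Matrix.mulVec_smul] at h
    exact h
  have E2' : S.map Complex.ofReal *ᵥ x = μ • (Tν.map Complex.ofReal *ᵥ ν') := by
    have h := congrArg (fun w => Tν.map Complex.ofReal *ᵥ w) E2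
    simp only [Matrix.mulVec_mulVec, m3, Matrix.mulVec_smul] at h
    exact h
  -- scalar quantities
  set a : ℂ := star x ⬝ᵥ (Q.map Complex.ofReal *ᵥ x) with ha
  set p : ℂ := star x ⬝ᵥ (Tx.map Complex.ofReal *ᵥ x) with hp
  set q : ℂ := star ν' ⬝ᵥ (Tν.map Complex.ofReal *ᵥ ν') with hq
  have eq1 : -a + -(star x ⬝ᵥ (Sᵀ.map Complex.ofReal *ᵥ ν')) = μ * p := by
    have h := congrArg (fun w => star x ⬝ᵥ w) E1'
    simpa [dotProduct_add, dotProduct_neg, dotProduct_smul, smul_eq_mul] using h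
  have eq2 : star ν' ⬝ᵥ (S.map Complex.ofReal *ᵥ x) = μ * q := by
    have h := congrArg (fun w => star ν' ⬝ᵥ w) E2'
    simpa [dotProduct_smul, smul_eq_mul] using h
  have hw : star x ⬝ᵥ (Sᵀ.map Complex.ofReal *ᵥ ν')
      = star (star ν' ⬝ᵥ (S.map Complex.ofReal *ᵥ x)) := by
    rw [Matrix.star_dotProduct]
    congr 1
    rw [Matrix.star_mulVec, mapC_conjTranspose, Matrix.transpose_transpose,
      ← Matrix.dotProduct_mulVec]
  have hqim : q.im = 0 := quad_im_zero hTν.1 ν'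
  have hpim : p.im = 0 := quad_im_zero hTx.1 x
  have key : -a.re = μ.re * (p.re + q.re) := by
    have h := congrArg Complex.re (eq1)
    rw [hw, eq2] at h
    simp only [star_mul', Complex.star_def, Complex.add_re, Complex.neg_re, Complex.mul_re,
      Complex.mul_im, Complex.conj_re, Complex.conj_im, hqim, hpim, mul_zero, zero_mul,
      sub_zero, neg_neg, neg_zero, add_zero] at h
    linarith [h]
  by_cases hxz : x = 0
  · -- then Sᵀ ν' = 0, so ν' = 0, so v = 0, contradiction
    rw [hxz] at E1'
    simp only [Matrix.mulVec_zero, neg_zero, smul_zero, zero_add] at E1'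
    have hν0 : ν' = 0 := transpose_ker S hS ν' (by
      have := congrArg Neg.neg E1'
      simpa using this)
    apply absurd hvel
    rw [hxz, hν0]
    intro hcon
    apply hv0
    rw [hcon]
    funext i; cases i <;> rfl
  · have hare : 0 < a.re := quad_re_pos hQ hxz
    have hpre : 0 < p.re := quad_re_pos hTx hxz
    have hqre : 0 ≤ q.re := quad_re_nonneg hTν.posSemidef ν'
    nlinarith [key, hare, hpre, hqre]
end

section
/- Let Q ∈ ℝ^{n×n} be symmetric positive definite, let S ∈ ℝ^{r×n} have full row rank with r < n, let T_x ∈ ℝ^{n×n} and T_ν ∈ ℝ^{r×r} be diagonal positive definite, and set A = [[−T_x⁻¹Q, −T_x⁻¹Sᵀ], [T_ν⁻¹S, 0]]. Then there exists ε > 0 such that the matrix P = (1/2)[[T_x, ε T_x Sᵀ], [ε S T_x, T_ν]] is symmetric positive definite and AᵀP + PA is negative definite. -/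
open Matrix

lemma quadform_continuous {m : Type*} [Fintype m] (M : Matrix m m ℝ) :
    Continuous fun x : m → ℝ => x ⬝ᵥ M *ᵥ x := by
  show Continuous fun x : m → ℝ => ∑ i, x i * ∑ j, M i j * x j
  fun_prop

lemma isHermitian_smul_real {m : Type*} [Fintype m] {N : Matrix m m ℝ}
    (hN : N.IsHermitian) (t : ℝ) : (t • N).IsHermitian := by
  rw [Matrix.IsHermitian, conjTranspose_smul, star_trivial, hN.eq]

lemma posdef_smul_real {m : Type*} [Fintype m] {M : Matrix m m ℝ}
    (hM : M.PosDef) {c : ℝ} (hc : 0 < c) : (c • M).PosDef := by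
  refine Matrix.PosDef.of_dotProduct_mulVec_pos (isHermitian_smul_real hM.1 c) fun x hx => ?_
  rw [smul_mulVec, dotProduct_smul, smul_eq_mul]
  exact mul_pos hc (hM.dotProduct_mulVec_pos hx)

lemma posdef_sub_smul {m : Type*} [Fintype m] (M N : Matrix m m ℝ)
    (hM : M.PosDef) (hN : N.IsHermitian) :
    ∃ δ : ℝ, 0 < δ ∧ ∀ t : ℝ, 0 ≤ t → t ≤ δ → (M - t • N).PosDef := by
  have herm : ∀ t : ℝ, (M - t • N).IsHermitian :=
    fun t => hM.1.sub (isHermitian_smul_real hN t)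
  rcases isEmpty_or_nonempty m with h | h
  · exact ⟨1, one_pos, fun t _ _ => ⟨herm t, fun x hx => absurd (Subsingleton.elim x 0) hx⟩⟩
  · have hsph : IsCompact (Metric.sphere (0 : m → ℝ) 1) := isCompact_sphere _ _
    have hne : (Metric.sphere (0 : m → ℝ) 1).Nonempty :=
      NormedSpace.sphere_nonempty.mpr zero_le_one
    obtain ⟨u₀, hu₀s, hu₀min⟩ := hsph.exists_isMinOn hne (quadform_continuous M).continuousOn
    obtain ⟨v₀, hv₀s, hv₀max⟩ := hsph.exists_isMaxOn hne (quadform_continuous N).continuousOn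
    set a : ℝ := u₀ ⬝ᵥ M *ᵥ u₀ with ha
    set b : ℝ := v₀ ⬝ᵥ N *ᵥ v₀ with hb
    have hu₀ne : u₀ ≠ 0 := by
      intro h0
      have := mem_sphere_zero_iff_norm.mp hu₀s
      rw [h0] at this; simp at this
    have hapos : 0 < a := by
      have := hM.dotProduct_mulVec_pos hu₀ne
      simpa [star_trivial] using this
    refine ⟨a / (2 * (|b| + 1)), by positivity, fun t ht htle => Matrix.PosDef.of_dotProduct_mulVec_pos (herm t) fun x hx => ?_⟩
    have hxnorm : ‖x‖ ≠ 0 := norm_ne_zero_iff.mpr hx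
    set c : ℝ := ‖x‖ with hc
    have hcpos : 0 < c := norm_pos_iff.mpr hx
    set u : m → ℝ := c⁻¹ • x with hu
    have hus : u ∈ Metric.sphere (0 : m → ℝ) 1 := by
      rw [mem_sphere_zero_iff_norm, hu, norm_smul]
      rw [Real.norm_eq_abs, abs_inv, abs_of_pos hcpos, ← hc, inv_mul_cancel₀ hxnorm]
    have hxu : x = c • u := by
      rw [hu, smul_smul, mul_inv_cancel₀ hxnorm, one_smul]
    have key : ∀ A : Matrix m m ℝ, x ⬝ᵥ A *ᵥ x = c ^ 2 * (u ⬝ᵥ A *ᵥ u) := by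
      intro A
      rw [hxu, smul_dotProduct, mulVec_smul, dotProduct_smul, smul_eq_mul, smul_eq_mul]
      ring
    have hMx : a ≤ u ⬝ᵥ M *ᵥ u := isMinOn_iff.mp hu₀min u hus
    have hNx : u ⬝ᵥ N *ᵥ u ≤ b := isMaxOn_iff.mp hv₀max u hus
    have hbound : t * (u ⬝ᵥ N *ᵥ u) ≤ a / 2 := by
      calc t * (u ⬝ᵥ N *ᵥ u) ≤ t * (|b| + 1) := by
            apply mul_le_mul_of_nonneg_left _ ht
            exact le_trans hNx (by linarith [le_abs_self b])
        _ ≤ (a / (2 * (|b| + 1))) * (|b| + 1) := by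
            apply mul_le_mul_of_nonneg_right htle (by positivity)
        _ = a / 2 := by field_simp
    have : 0 < x ⬝ᵥ (M - t • N) *ᵥ x := by
      rw [sub_mulVec, dotProduct_sub, smul_mulVec, dotProduct_smul, key M, key N]
      have h2 : t • (c ^ 2 * (u ⬝ᵥ N *ᵥ u)) = c ^ 2 * (t * (u ⬝ᵥ N *ᵥ u)) := by
        rw [smul_eq_mul]; ring
      rw [h2]
      have hq : a / 2 ≤ (u ⬝ᵥ M *ᵥ u) - t * (u ⬝ᵥ N *ᵥ u) := by linarith
      have hc2 : 0 < c ^ 2 := by positivity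
      nlinarith [mul_le_mul_of_nonneg_left hq (le_of_lt hc2), mul_pos hc2 (half_pos hapos)]
    simpa [star_trivial] using this

lemma posdef_mul_transpose_self {r n : ℕ} (S : Matrix (Fin r) (Fin n) ℝ) (hS : S.rank = r) :
    (S * Sᵀ).PosDef := by
  have hli : LinearIndependent ℝ (fun i => S i) := by
    show LinearIndependent ℝ S.row
    rw [linearIndependent_iff_card_eq_finrank_span, Set.finrank,
      ← S.rank_eq_finrank_span_row, hS, Fintype.card_fin]
  have hinj : Function.Injective S.vecMul := Matrix.vecMul_injective_iff.mpr hli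
  have hH : Sᴴ = Sᵀ := by ext i j; simp
  refine Matrix.PosDef.of_dotProduct_mulVec_pos ?_ fun x hx => ?_
  · have h := Matrix.posSemidef_self_mul_conjTranspose S
    rw [hH] at h
    exact h.1
  · have hv : x ᵥ* S ≠ 0 := fun h0 => hx (hinj (h0.trans (zero_vecMul S).symm))
    have : x ⬝ᵥ (S * Sᵀ) *ᵥ x = (x ᵥ* S) ⬝ᵥ (x ᵥ* S) := by
      rw [← mulVec_mulVec, dotProduct_mulVec, mulVec_transpose]
    rw [star_trivial, this]
    calc (0:ℝ) < star (x ᵥ* S) ⬝ᵥ (x ᵥ* S) := dotProduct_star_self_pos_iff.mpr hv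
      _ = (x ᵥ* S) ⬝ᵥ (x ᵥ* S) := by rw [star_trivial]

lemma posdef_fromBlocks₂₂' {m n : Type*} [Fintype m] [Fintype n] [DecidableEq n]
    (A : Matrix m m ℝ) (B : Matrix m n ℝ) {D : Matrix n n ℝ} (hD : D.PosDef)
    (hSchur : (A - B * D⁻¹ * Bᴴ).PosDef) :
    (fromBlocks A B Bᴴ D).PosDef := by
  haveI : Invertible D := D.invertibleOfIsUnitDet hD.det_pos.ne'.isUnit
  refine Matrix.PosDef.of_dotProduct_mulVec_pos ((Matrix.IsHermitian.fromBlocks₂₂ A B hD.1).mpr hSchur.1) fun z hz => ?_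
  have hzd : z = (z ∘ Sum.inl) ⊕ᵥ (z ∘ Sum.inr) := (Sum.elim_comp_inl_inr z).symm
  rw [dotProduct_mulVec, hzd,
    schur_complement_eq₂₂ A B (z ∘ Sum.inl) (z ∘ Sum.inr) hD.1]
  set x := z ∘ Sum.inl
  set y := z ∘ Sum.inr
  set w := (D⁻¹ * Bᴴ) *ᵥ x + y with hw
  have t1 : 0 ≤ star w ᵥ* D ⬝ᵥ w := by
    have := hD.posSemidef.dotProduct_mulVec_nonneg w
    rwa [dotProduct_mulVec] at this
  have t2 : 0 ≤ star x ᵥ* (A - B * D⁻¹ * Bᴴ) ⬝ᵥ x := by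
    have := hSchur.posSemidef.dotProduct_mulVec_nonneg x
    rwa [dotProduct_mulVec] at this
  rcases eq_or_ne x 0 with hx0 | hx0
  · have hy0 : y ≠ 0 := by
      intro hy0
      apply hz
      rw [hzd, hx0, hy0]
      ext (i | i) <;> simp
    have hw0 : w ≠ 0 := by rw [hw, hx0, mulVec_zero, zero_add]; exact hy0
    have t1' : 0 < star w ᵥ* D ⬝ᵥ w := by
      have := hD.dotProduct_mulVec_pos hw0
      rwa [dotProduct_mulVec] at this
    linarith
  · have t2' : 0 < star x ᵥ* (A - B * D⁻¹ * Bᴴ) ⬝ᵥ x := by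
      have := hSchur.dotProduct_mulVec_pos hx0
      rwa [dotProduct_mulVec] at this
    linarith

/-- There exists `ε > 0` such that
`P = (1/2)[[Tx, ε Tx Sᵀ], [ε S Tx, Tν]]` is symmetric positive definite and
`AᵀP + PA` is negative definite, where
`A = [[−Tx⁻¹Q, −Tx⁻¹Sᵀ], [Tν⁻¹S, 0]]`. -/
theorem saddle_point_lyapunov_certificate
    (n r : ℕ) (hrn : r < n)
    (Q : Matrix (Fin n) (Fin n) ℝ) (hQ : Q.PosDef)
    (S : Matrix (Fin r) (Fin n) ℝ) (hS : S.rank = r)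
    (Tx : Matrix (Fin n) (Fin n) ℝ) (hTxd : Tx.IsDiag) (hTx : Tx.PosDef)
    (Tν : Matrix (Fin r) (Fin r) ℝ) (hTνd : Tν.IsDiag) (hTν : Tν.PosDef) :
    ∃ ε : ℝ, 0 < ε ∧
      ((1 / 2 : ℝ) •
        Matrix.fromBlocks Tx (ε • (Tx * Sᵀ)) (ε • (S * Tx)) Tν).PosDef ∧
      (-((Matrix.fromBlocks (-(Tx⁻¹ * Q)) (-(Tx⁻¹ * Sᵀ)) (Tν⁻¹ * S)
            (0 : Matrix (Fin r) (Fin r) ℝ))ᵀ *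
          ((1 / 2 : ℝ) •
            Matrix.fromBlocks Tx (ε • (Tx * Sᵀ)) (ε • (S * Tx)) Tν) +
        ((1 / 2 : ℝ) •
            Matrix.fromBlocks Tx (ε • (Tx * Sᵀ)) (ε • (S * Tx)) Tν) *
          (Matrix.fromBlocks (-(Tx⁻¹ * Q)) (-(Tx⁻¹ * Sᵀ)) (Tν⁻¹ * S)
            (0 : Matrix (Fin r) (Fin r) ℝ)))).PosDef := by
  haveI : Invertible Tx := Tx.invertibleOfIsUnitDet hTx.det_pos.ne'.isUnit
  haveI : Invertible Tν := Tν.invertibleOfIsUnitDet hTν.det_pos.ne'.isUnit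
  have hQT : Qᵀ = Q := hQ.1
  have hTxT : Txᵀ = Tx := hTx.1
  have hTνT : Tνᵀ = Tν := hTν.1
  have hTxiT : Tx⁻¹ᵀ = Tx⁻¹ := by rw [Matrix.transpose_nonsing_inv, hTxT]
  have hTνiT : Tν⁻¹ᵀ = Tν⁻¹ := by rw [Matrix.transpose_nonsing_inv, hTνT]
  have hW : (S * Sᵀ).PosDef := posdef_mul_transpose_self S hS
  have hB0 : (Tx * Sᵀ)ᴴ = S * Tx := by
    show (Tx * Sᵀ)ᵀ = S * Tx
    rw [transpose_mul, transpose_transpose, hTxT]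
  have hQS : (Q * Sᵀ)ᴴ = S * Q := by
    show (Q * Sᵀ)ᵀ = S * Q
    rw [transpose_mul, transpose_transpose, hQT]
  have hKh : ((Tx * Sᵀ) * Tν⁻¹ * (S * Tx)).IsHermitian := by
    rw [← hB0]; exact isHermitian_mul_mul_conjTranspose _ hTν.1.inv
  have hK2h : ((Q * Sᵀ) * (S * Sᵀ)⁻¹ * (S * Q)).IsHermitian := by
    rw [← hQS]; exact isHermitian_mul_mul_conjTranspose _ hW.1.inv
  have hCh : ((Tx*Sᵀ)*(Tν⁻¹*S) + ((Tx*Sᵀ)*(Tν⁻¹*S))ᵀ).IsHermitian :=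
    isHermitian_add_transpose_self _
  have hNNh : ((Tx*Sᵀ)*(Tν⁻¹*S) + ((Tx*Sᵀ)*(Tν⁻¹*S))ᵀ
      + (1/2 : ℝ) • ((Q * Sᵀ) * (S * Sᵀ)⁻¹ * (S * Q))).IsHermitian :=
    hCh.add (isHermitian_smul_real hK2h (1/2))
  have h2Q : ((2:ℝ) • Q).PosDef := by rw [two_smul]; exact hQ.add hQ
  obtain ⟨δ₁, hδ₁pos, hδ₁⟩ := posdef_sub_smul Tx _ hTx hKh
  obtain ⟨δ₂, hδ₂pos, hδ₂⟩ := posdef_sub_smul ((2:ℝ)•Q) _ h2Q hNNh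
  set ε := min 1 (min δ₁ δ₂) with hεdef
  have hε : 0 < ε := lt_min one_pos (lt_min hδ₁pos hδ₂pos)
  have hε1 : ε ≤ 1 := min_le_left _ _
  have hεδ₁ : ε ≤ δ₁ := le_trans (min_le_right _ _) (min_le_left _ _)
  have hεδ₂ : ε ≤ δ₂ := le_trans (min_le_right _ _) (min_le_right _ _)
  have hB1 : (ε • (Tx * Sᵀ))ᴴ = ε • (S * Tx) := by
    rw [conjTranspose_smul, hB0, star_trivial]
  have hB2 : (ε • (Q * Sᵀ))ᴴ = ε • (S * Q) := by
    rw [conjTranspose_smul, hQS, star_trivial]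
  refine ⟨ε, hε, ?_, ?_⟩
  · refine posdef_smul_real ?_ one_half_pos
    rw [← hB1]
    apply posdef_fromBlocks₂₂' Tx (ε • (Tx * Sᵀ)) hTν
    have he : Tx - (ε • (Tx * Sᵀ)) * Tν⁻¹ * (ε • (Tx * Sᵀ))ᴴ
        = Tx - (ε*ε) • ((Tx*Sᵀ) * Tν⁻¹ * (S*Tx)) := by
      rw [hB1]
      simp only [Matrix.smul_mul, Matrix.mul_smul, smul_smul]
    rw [he]
    exact hδ₁ (ε*ε) (by positivity) (by nlinarith)
  · have hhalf : -((Matrix.fromBlocks (-(Tx⁻¹ * Q)) (-(Tx⁻¹ * Sᵀ)) (Tν⁻¹ * S)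
            (0 : Matrix (Fin r) (Fin r) ℝ))ᵀ *
          ((1 / 2 : ℝ) • Matrix.fromBlocks Tx (ε • (Tx * Sᵀ)) (ε • (S * Tx)) Tν) +
        ((1 / 2 : ℝ) • Matrix.fromBlocks Tx (ε • (Tx * Sᵀ)) (ε • (S * Tx)) Tν) *
          Matrix.fromBlocks (-(Tx⁻¹ * Q)) (-(Tx⁻¹ * Sᵀ)) (Tν⁻¹ * S)
            (0 : Matrix (Fin r) (Fin r) ℝ))
        = (1/2 : ℝ) • -((Matrix.fromBlocks (-(Tx⁻¹ * Q)) (-(Tx⁻¹ * Sᵀ)) (Tν⁻¹ * S)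
            (0 : Matrix (Fin r) (Fin r) ℝ))ᵀ *
          Matrix.fromBlocks Tx (ε • (Tx * Sᵀ)) (ε • (S * Tx)) Tν +
        Matrix.fromBlocks Tx (ε • (Tx * Sᵀ)) (ε • (S * Tx)) Tν *
          Matrix.fromBlocks (-(Tx⁻¹ * Q)) (-(Tx⁻¹ * Sᵀ)) (Tν⁻¹ * S)
            (0 : Matrix (Fin r) (Fin r) ℝ)) := by
      rw [Matrix.mul_smul, Matrix.smul_mul, ← smul_add, ← smul_neg]
    have hN : -((Matrix.fromBlocks (-(Tx⁻¹ * Q)) (-(Tx⁻¹ * Sᵀ)) (Tν⁻¹ * S)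
            (0 : Matrix (Fin r) (Fin r) ℝ))ᵀ *
          Matrix.fromBlocks Tx (ε • (Tx * Sᵀ)) (ε • (S * Tx)) Tν +
        Matrix.fromBlocks Tx (ε • (Tx * Sᵀ)) (ε • (S * Tx)) Tν *
          Matrix.fromBlocks (-(Tx⁻¹ * Q)) (-(Tx⁻¹ * Sᵀ)) (Tν⁻¹ * S)
            (0 : Matrix (Fin r) (Fin r) ℝ)) =
      Matrix.fromBlocks
        ((2:ℝ) • Q - ε • ((Tx*Sᵀ)*(Tν⁻¹*S) + ((Tx*Sᵀ)*(Tν⁻¹*S))ᵀ))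
        (ε • (Q * Sᵀ)) (ε • (S * Q)) ((2*ε) • (S * Sᵀ)) := by
      rw [fromBlocks_transpose, fromBlocks_multiply, fromBlocks_multiply, fromBlocks_add,
        fromBlocks_neg, fromBlocks_inj]
      refine ⟨?_, ?_, ?_, ?_⟩ <;>
        simp only [transpose_neg, transpose_mul, transpose_transpose, transpose_zero,
          transpose_smul, hQT, hTxT, hTνT, hTxiT, hTνiT, Matrix.neg_mul, Matrix.mul_neg,
          smul_mul_assoc, Matrix.smul_mul, Matrix.mul_smul, mul_smul_comm, Matrix.zero_mul,
          Matrix.mul_zero, add_zero, zero_add, Matrix.mul_assoc,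
          Matrix.mul_inv_cancel_left_of_invertible, Matrix.inv_mul_cancel_left_of_invertible,
          Matrix.mul_inv_of_invertible, Matrix.inv_mul_of_invertible, Matrix.mul_one,
          Matrix.one_mul, neg_neg, smul_zero, smul_smul, two_smul, two_mul, add_smul, smul_add,
          smul_sub, smul_neg, neg_add_rev, sub_eq_add_neg] <;>
        abel
    rw [hhalf, hN]
    refine posdef_smul_real ?_ one_half_pos
    rw [← hB2]
    apply posdef_fromBlocks₂₂' _ _ (posdef_smul_real hW (by positivity))
    have hinv : ((2*ε) • (S*Sᵀ))⁻¹ = (2*ε)⁻¹ • (S*Sᵀ)⁻¹ := by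
      haveI : Invertible (2*ε) := invertibleOfNonzero (by positivity)
      rw [Matrix.inv_smul (A := S * Sᵀ) (k := 2*ε) hW.det_pos.ne'.isUnit, invOf_eq_inv]
    have hs : ((2:ℝ) • Q - ε • ((Tx*Sᵀ)*(Tν⁻¹*S) + ((Tx*Sᵀ)*(Tν⁻¹*S))ᵀ))
          - (ε • (Q * Sᵀ)) * ((2*ε) • (S*Sᵀ))⁻¹ * (ε • (Q * Sᵀ))ᴴ
        = (2:ℝ) • Q - ε • ((Tx*Sᵀ)*(Tν⁻¹*S) + ((Tx*Sᵀ)*(Tν⁻¹*S))ᵀ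
            + (1/2 : ℝ) • ((Q * Sᵀ) * (S * Sᵀ)⁻¹ * (S * Q))) := by
      rw [hB2, hinv]
      have hsc : (ε • (Q * Sᵀ)) * ((2*ε)⁻¹ • (S*Sᵀ)⁻¹) * (ε • (S * Q))
          = (ε * (1/2)) • ((Q * Sᵀ) * (S * Sᵀ)⁻¹ * (S * Q)) := by
        simp only [Matrix.smul_mul, Matrix.mul_smul, smul_smul, Matrix.mul_assoc]
        congr 1
        have : ε ≠ 0 := hε.ne'
        field_simp
      rw [hsc]
      module
    rw [hs]
    exact hδ₂ ε hε.le hεδ₂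
end

section
/- Let Q ∈ ℝ^{n×n} be diagonal positive definite, let S ∈ ℝ^{r×n} have full row rank with r < n, let T_x ∈ ℝ^{n×n} and T_ν ∈ ℝ^{r×r} be diagonal positive definite, and define A = [[−T_x⁻¹Q, −T_x⁻¹Sᵀ], [T_ν⁻¹S, 0]] and C = [Q^{1/2}, 0] ∈ ℝ^{n×(n+r)}. Then the block-diagonal matrix X = (1/2)·blkdiag(T_x, T_ν) is symmetric positive definite and is the unique symmetric solution of the Lyapunov equation AᵀX + XA + CᵀC = 0. -/
open Matrix

/-- The square root of a positive semidefinite matrix, as defined in the older Mathlib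
(`Matrix.PosSemidef.sqrt`, removed since). -/
noncomputable def Matrix.PosSemidef.sqrt {n : Type*} [Fintype n] [DecidableEq n]
    {𝕜 : Type*} [RCLike 𝕜] [PartialOrder 𝕜] {A : Matrix n n 𝕜} (hA : A.PosSemidef) : Matrix n n 𝕜 :=
  hA.1.eigenvectorUnitary.1 * diagonal ((↑) ∘ (√·) ∘ hA.1.eigenvalues) *
  (star hA.1.eigenvectorUnitary : Matrix n n 𝕜)

lemma aux_sqrt_mul_self {m : Type*} [Fintype m] [DecidableEq m] {M : Matrix m m ℝ}
    (hM : M.PosSemidef) : hM.sqrt * hM.sqrt = M := by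
  conv_rhs => rw [hM.1.spectral_theorem, Unitary.conjStarAlgAut_apply]
  unfold Matrix.PosSemidef.sqrt
  have hU : (star hM.1.eigenvectorUnitary : Matrix m m ℝ) * hM.1.eigenvectorUnitary = 1 :=
    Unitary.coe_star_mul_self _
  have hD : diagonal ((RCLike.ofReal : ℝ → ℝ) ∘ (√·) ∘ hM.1.eigenvalues) * diagonal ((RCLike.ofReal : ℝ → ℝ) ∘ (√·) ∘ hM.1.eigenvalues)
      = (diagonal (RCLike.ofReal ∘ hM.1.eigenvalues) : Matrix m m ℝ) := by
    rw [Matrix.diagonal_mul_diagonal]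
    congr 1
    funext i
    simp [Real.mul_self_sqrt (hM.eigenvalues_nonneg i)]
  calc _ = (hM.1.eigenvectorUnitary : Matrix m m ℝ) *
        (diagonal ((RCLike.ofReal : ℝ → ℝ) ∘ (√·) ∘ hM.1.eigenvalues) *
          ((star hM.1.eigenvectorUnitary : Matrix m m ℝ) *
            (hM.1.eigenvectorUnitary : Matrix m m ℝ)) *
          diagonal ((RCLike.ofReal : ℝ → ℝ) ∘ (√·) ∘ hM.1.eigenvalues)) *
        (star hM.1.eigenvectorUnitary : Matrix m m ℝ) := by simp only [Matrix.mul_assoc]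
    _ = _ := by rw [hU, Matrix.mul_one, hD]

lemma aux_sqrt_isHermitian {m : Type*} [Fintype m] [DecidableEq m] {M : Matrix m m ℝ}
    (hM : M.PosSemidef) : hM.sqrt.IsHermitian := by
  unfold Matrix.PosSemidef.sqrt Matrix.IsHermitian
  rw [Matrix.conjTranspose_mul, Matrix.conjTranspose_mul, Matrix.diagonal_conjTranspose,
    ← Matrix.star_eq_conjTranspose, ← Matrix.star_eq_conjTranspose, star_star, star_trivial,
    Matrix.mul_assoc]

lemma aux_cancel_left {m k : Type*} [Fintype m] [DecidableEq m] [Fintype k]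
    {M : Matrix m m ℝ} (hM : IsUnit M.det) {N : Matrix m k ℝ}
    (h : M * N = 0) : N = 0 := by
  have h2 := congrArg (fun Z => M⁻¹ * Z) h
  simpa [← Matrix.mul_assoc, Matrix.nonsing_inv_mul M hM] using h2

lemma aux_trace_zero {m k : Type*} [Fintype m] [Fintype k]
    {A : Matrix m k ℝ} (h : Matrix.trace (Aᵀ * A) = 0) : A = 0 := by
  have h' : ∑ j : k, ∑ i : m, A i j * A i j = 0 := by
    simpa [Matrix.trace, Matrix.diag, Matrix.mul_apply, Matrix.transpose_apply] using h
  ext i j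
  have hnn : ∀ p ∈ (Finset.univ : Finset k), 0 ≤ ∑ i : m, A i p * A i p :=
    fun p _ => Finset.sum_nonneg fun i _ => mul_self_nonneg _
  have h1 : ∑ i : m, A i j * A i j = 0 :=
    (Finset.sum_eq_zero_iff_of_nonneg hnn).mp h' j (Finset.mem_univ j)
  have h2 : A i j * A i j = 0 :=
    (Finset.sum_eq_zero_iff_of_nonneg (fun i _ => mul_self_nonneg _)).mp h1 i (Finset.mem_univ i)
  exact mul_self_eq_zero.mp h2

lemma aux_full_rank_cancel {r n : ℕ} {S : Matrix (Fin r) (Fin n) ℝ} (hS : S.rank = r)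
    {k : Type*} [Fintype k] {M : Matrix (Fin r) k ℝ} (h : Sᵀ * M = 0) : M = 0 := by
  have hr : (S * Sᵀ).rank = r := by rw [Matrix.rank_self_mul_transpose, hS]
  have hfin : Module.finrank ℝ (LinearMap.range (S * Sᵀ).mulVecLin) = r := hr
  have htop : LinearMap.range (S * Sᵀ).mulVecLin = ⊤ := by
    apply Submodule.eq_top_of_finrank_eq
    rw [hfin]
    simp
  have hsurj : Function.Surjective (S * Sᵀ).mulVec := by
    intro y
    obtain ⟨x, hx⟩ := LinearMap.range_eq_top.mp htop y
    exact ⟨x, hx⟩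
  have hu : IsUnit (S * Sᵀ) := Matrix.mulVec_surjective_iff_isUnit.mp hsurj
  have hud : IsUnit (S * Sᵀ).det := (Matrix.isUnit_iff_isUnit_det _).mp hu
  exact aux_cancel_left hud (by rw [Matrix.mul_assoc, h, Matrix.mul_zero])

/-- `X = (1/2)·blkdiag(Tx, Tν)` is symmetric positive definite and is
the unique symmetric solution of the Lyapunov equation `AᵀX + XA + CᵀC = 0`, where
`A = [[−Tx⁻¹Q, −Tx⁻¹Sᵀ], [Tν⁻¹S, 0]]` and `C = [Q^{1/2}, 0]`. -/
theorem saddle_point_observability_gramian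
    (n r : ℕ) (hrn : r < n)
    (Q : Matrix (Fin n) (Fin n) ℝ) (hQd : Q.IsDiag) (hQ : Q.PosDef)
    (S : Matrix (Fin r) (Fin n) ℝ) (hS : S.rank = r)
    (Tx : Matrix (Fin n) (Fin n) ℝ) (hTxd : Tx.IsDiag) (hTx : Tx.PosDef)
    (Tν : Matrix (Fin r) (Fin r) ℝ) (hTνd : Tν.IsDiag) (hTν : Tν.PosDef)
    (A : Matrix (Fin n ⊕ Fin r) (Fin n ⊕ Fin r) ℝ)
    (hA : A = Matrix.fromBlocks (-(Tx⁻¹ * Q)) (-(Tx⁻¹ * Sᵀ)) (Tν⁻¹ * S) 0)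
    (C : Matrix (Fin n) (Fin n ⊕ Fin r) ℝ)
    (hC : C = Matrix.fromCols hQ.posSemidef.sqrt 0)
    (X : Matrix (Fin n ⊕ Fin r) (Fin n ⊕ Fin r) ℝ)
    (hX : X = (1 / 2 : ℝ) • Matrix.fromBlocks Tx 0 0 Tν) :
    X.PosDef ∧ Aᵀ * X + X * A + Cᵀ * C = 0 ∧
      ∀ Y : Matrix (Fin n ⊕ Fin r) (Fin n ⊕ Fin r) ℝ,
        Y.IsSymm → Aᵀ * Y + Y * A + Cᵀ * C = 0 → Y = X := by
  -- basic symmetry facts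
  have hQt : Qᵀ = Q := hQd.isSymm
  have hTxt : Txᵀ = Tx := hTxd.isSymm
  have hTνt : Tνᵀ = Tν := hTνd.isSymm
  have hTxdet : IsUnit Tx.det := hTx.det_pos.ne'.isUnit
  have hTνdet : IsUnit Tν.det := hTν.det_pos.ne'.isUnit
  have hQdet : IsUnit Q.det := hQ.det_pos.ne'.isUnit
  -- the square root of Q
  set B : Matrix (Fin n) (Fin n) ℝ := hQ.posSemidef.sqrt with hBdef
  have hBB : B * B = Q := aux_sqrt_mul_self hQ.posSemidef
  have hBt : Bᵀ = B := by
    have h : Bᴴ = B := aux_sqrt_isHermitian hQ.posSemidef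
    rwa [Matrix.conjTranspose_eq_transpose_of_trivial] at h
  -- square roots of Tx, Tν and their inverses
  set P : Matrix (Fin n) (Fin n) ℝ := hTx.posSemidef.sqrt with hPdef
  set Pν : Matrix (Fin r) (Fin r) ℝ := hTν.posSemidef.sqrt with hPνdef
  have hPP : P * P = Tx := aux_sqrt_mul_self hTx.posSemidef
  have hPνPν : Pν * Pν = Tν := aux_sqrt_mul_self hTν.posSemidef
  have hPt : Pᵀ = P := by
    have h : Pᴴ = P := aux_sqrt_isHermitian hTx.posSemidef
    rwa [Matrix.conjTranspose_eq_transpose_of_trivial] at h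
  have hPνt : Pνᵀ = Pν := by
    have h : Pνᴴ = Pν := aux_sqrt_isHermitian hTν.posSemidef
    rwa [Matrix.conjTranspose_eq_transpose_of_trivial] at h
  have hPdet : IsUnit P.det := by
    have h : P.det * P.det = Tx.det := by rw [← Matrix.det_mul, hPP]
    have h2 := hTx.det_pos
    rw [← h] at h2
    exact isUnit_iff_ne_zero.mpr (fun h0 => by rw [h0, mul_zero] at h2; exact lt_irrefl _ h2)
  have hPνdet : IsUnit Pν.det := by
    have h : Pν.det * Pν.det = Tν.det := by rw [← Matrix.det_mul, hPνPν]
    have h2 := hTν.det_pos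
    rw [← h] at h2
    exact isUnit_iff_ne_zero.mpr (fun h0 => by rw [h0, mul_zero] at h2; exact lt_irrefl _ h2)
  set ex : Matrix (Fin n) (Fin n) ℝ := P⁻¹ with hexdef
  set eν : Matrix (Fin r) (Fin r) ℝ := Pν⁻¹ with heνdef
  have hext : exᵀ = ex := by rw [hexdef, Matrix.transpose_nonsing_inv, hPt]
  have heνt : eνᵀ = eν := by rw [heνdef, Matrix.transpose_nonsing_inv, hPνt]
  have hexP : ex * P = 1 := Matrix.nonsing_inv_mul _ hPdet
  have hPex : P * ex = 1 := Matrix.mul_nonsing_inv _ hPdet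
  have heνPν : eν * Pν = 1 := Matrix.nonsing_inv_mul _ hPνdet
  have hPνeν : Pν * eν = 1 := Matrix.mul_nonsing_inv _ hPνdet
  have hexdet : IsUnit ex.det := IsUnit.of_mul_eq_one P.det
    (by rw [← Matrix.det_mul, hexP, Matrix.det_one])
  have heνdet : IsUnit eν.det := IsUnit.of_mul_eq_one Pν.det
    (by rw [← Matrix.det_mul, heνPν, Matrix.det_one])
  have hexex : ex * ex = Tx⁻¹ := by rw [hexdef, ← Matrix.mul_inv_rev, hPP]
  have heνeν : eν * eν = Tν⁻¹ := by rw [heνdef, ← Matrix.mul_inv_rev, hPνPν]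
  -- symmetry of X
  have hXt : Xᵀ = X := by
    rw [hX, Matrix.transpose_smul, Matrix.fromBlocks_transpose, hTxt, hTνt,
      Matrix.transpose_zero, Matrix.transpose_zero]
  -- Part 1 : X is positive definite
  have hXpos : X.PosDef := by
    rw [Matrix.posDef_iff_dotProduct_mulVec]
    constructor
    · show Xᴴ = X
      rw [Matrix.conjTranspose_eq_transpose_of_trivial, hXt]
    · intro x hx
      have hstar : star x = x := star_trivial x
      rw [hstar, hX, Matrix.smul_mulVec, Matrix.fromBlocks_mulVec]
      simp only [Matrix.zero_mulVec, add_zero, zero_add]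
      rw [dotProduct_smul]
      have hxe : x = Sum.elim (x ∘ Sum.inl) (x ∘ Sum.inr) := (Sum.elim_comp_inl_inr x).symm
      rw [show x ⬝ᵥ Sum.elim (Tx *ᵥ (x ∘ Sum.inl)) (Tν *ᵥ (x ∘ Sum.inr))
            = Sum.elim (x ∘ Sum.inl) (x ∘ Sum.inr) ⬝ᵥ
                Sum.elim (Tx *ᵥ (x ∘ Sum.inl)) (Tν *ᵥ (x ∘ Sum.inr)) from by rw [← hxe]]
      rw [sumElim_dotProduct_sumElim]
      have hcases : x ∘ Sum.inl ≠ 0 ∨ x ∘ Sum.inr ≠ 0 := by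
        by_contra hcon
        push_neg at hcon
        apply hx
        funext i
        cases i with
        | inl i => exact congrFun hcon.1 i
        | inr i => exact congrFun hcon.2 i
      have hpos : 0 < (x ∘ Sum.inl) ⬝ᵥ Tx *ᵥ (x ∘ Sum.inl)
          + (x ∘ Sum.inr) ⬝ᵥ Tν *ᵥ (x ∘ Sum.inr) := by
        rcases hcases with h | h
        · have h1 := hTx.dotProduct_mulVec_pos h
          have h2 := hTν.posSemidef.dotProduct_mulVec_nonneg (x ∘ Sum.inr)
          rw [star_trivial] at h1 h2
          exact add_pos_of_pos_of_nonneg h1 h2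
        · have h1 := hTx.posSemidef.dotProduct_mulVec_nonneg (x ∘ Sum.inl)
          have h2 := hTν.dotProduct_mulVec_pos h
          rw [star_trivial] at h1 h2
          exact add_pos_of_nonneg_of_pos h1 h2
      have : (0:ℝ) < 1/2 := by norm_num
      calc (0:ℝ) = (1/2 : ℝ) • (0:ℝ) := by norm_num
      _ < _ := by
        rw [smul_eq_mul, smul_eq_mul]
        exact (mul_lt_mul_iff_right₀ this).mpr hpos
  -- Part 2 : the Lyapunov identity
  have hTA : (Matrix.fromBlocks Tx 0 0 Tν) * A = Matrix.fromBlocks (-Q) (-Sᵀ) S 0 := by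
    rw [hA, Matrix.fromBlocks_multiply, Matrix.fromBlocks_inj]
    refine ⟨?_, ?_, ?_, ?_⟩
    · rw [Matrix.zero_mul, add_zero, Matrix.mul_neg, Matrix.mul_nonsing_inv_cancel_left _ _ hTxdet]
    · rw [Matrix.mul_zero, add_zero, Matrix.mul_neg, Matrix.mul_nonsing_inv_cancel_left _ _ hTxdet]
    · rw [Matrix.zero_mul, zero_add, Matrix.mul_nonsing_inv_cancel_left _ _ hTνdet]
    · rw [Matrix.zero_mul, Matrix.mul_zero, add_zero]
  have hXA : X * A = (1/2 : ℝ) • Matrix.fromBlocks (-Q) (-Sᵀ) S 0 := by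
    rw [hX, Matrix.smul_mul, hTA]
  have hAX : Aᵀ * X = (1/2 : ℝ) • Matrix.fromBlocks (-Q) Sᵀ (-S) 0 := by
    have h := congrArg Matrix.transpose hXA
    rw [Matrix.transpose_mul, hXt, Matrix.transpose_smul, Matrix.fromBlocks_transpose,
      Matrix.transpose_neg, Matrix.transpose_neg, hQt, Matrix.transpose_transpose,
      Matrix.transpose_zero] at h
    exact h
  have hCC : Cᵀ * C = Matrix.fromBlocks Q 0 0 0 := by
    rw [hC, Matrix.transpose_fromCols, Matrix.transpose_zero,
      Matrix.fromRows_mul_fromCols, hBt, hBB, Matrix.mul_zero, Matrix.zero_mul,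
      Matrix.zero_mul]
  have hLyap : Aᵀ * X + X * A + Cᵀ * C = 0 := by
    rw [hAX, hXA, hCC, ← smul_add, Matrix.fromBlocks_add]
    have e1 : -Q + -Q = -(Q + Q) := by abel
    rw [e1]
    simp only [add_neg_cancel, neg_add_cancel, add_zero]
    rw [Matrix.fromBlocks_smul, Matrix.fromBlocks_add]
    have e2 : (1/2 : ℝ) • -(Q + Q) + Q = 0 := by
      rw [smul_neg]
      have : (1/2 : ℝ) • (Q + Q) = Q := by
        rw [← two_smul ℝ Q, smul_smul]
        norm_num
      rw [this, neg_add_cancel]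
    rw [e2]
    simp only [smul_zero, add_zero, zero_add, Matrix.fromBlocks_zero]
  refine ⟨hXpos, hLyap, ?_⟩
  -- Part 3 : uniqueness
  intro Y hYs hYeq
  set D : Matrix (Fin n ⊕ Fin r) (Fin n ⊕ Fin r) ℝ := Y - X with hDdef
  have hDt : Dᵀ = D := by rw [hDdef, Matrix.transpose_sub, hYs, hXt]
  have hD0 : Aᵀ * D + D * A = 0 := by
    have hcalc : Aᵀ * D + D * A
        = (Aᵀ * Y + Y * A + Cᵀ * C) - (Aᵀ * X + X * A + Cᵀ * C) := by
      rw [hDdef]; noncomm_ring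
    rw [hcalc, hYeq, hLyap, sub_zero]
  -- block diagonal square roots
  set EB : Matrix (Fin n ⊕ Fin r) (Fin n ⊕ Fin r) ℝ := Matrix.fromBlocks ex 0 0 eν with hEBdef
  set FB : Matrix (Fin n ⊕ Fin r) (Fin n ⊕ Fin r) ℝ := Matrix.fromBlocks P 0 0 Pν with hFBdef
  have hEBt : EBᵀ = EB := by
    rw [hEBdef, Matrix.fromBlocks_transpose, hext, heνt, Matrix.transpose_zero,
      Matrix.transpose_zero]
  have hFE : FB * EB = 1 := by
    rw [hFBdef, hEBdef, Matrix.fromBlocks_multiply]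
    simp only [Matrix.mul_zero, Matrix.zero_mul, add_zero, zero_add, hPex, hPνeν]
    exact Matrix.fromBlocks_one
  have hEF : EB * FB = 1 := by
    rw [hFBdef, hEBdef, Matrix.fromBlocks_multiply]
    simp only [Matrix.mul_zero, Matrix.zero_mul, add_zero, zero_add, hexP, heνPν]
    exact Matrix.fromBlocks_one
  set K : Matrix (Fin n ⊕ Fin r) (Fin n ⊕ Fin r) ℝ := Matrix.fromBlocks (-Q) (-Sᵀ) S 0
    with hKdef
  have hAK : A = EB * EB * K := by
    rw [hA, ← hexex, ← heνeν, hEBdef, hKdef, Matrix.fromBlocks_multiply,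
      Matrix.fromBlocks_multiply]
    simp only [Matrix.mul_zero, Matrix.zero_mul, add_zero, zero_add, neg_zero, Matrix.mul_neg,
      Matrix.mul_assoc]
  have hAt : Aᵀ = Kᵀ * (EB * EB) := by
    rw [hAK, Matrix.transpose_mul, Matrix.transpose_mul, hEBt]
  set W : Matrix (Fin n ⊕ Fin r) (Fin n ⊕ Fin r) ℝ := EB * D * EB with hWdef
  have hWt : Wᵀ = W := by
    rw [hWdef, Matrix.transpose_mul, Matrix.transpose_mul, hEBt, hDt, Matrix.mul_assoc]
  have key : (EB * Kᵀ * EB) * W + W * (EB * K * EB) = 0 := by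
    have hexp : (EB * Kᵀ * EB) * W + W * (EB * K * EB)
        = EB * ((Kᵀ * (EB * EB)) * D + D * (EB * EB * K)) * EB := by
      rw [hWdef]
      simp only [Matrix.mul_add, Matrix.add_mul, Matrix.mul_assoc]
    rw [hexp, ← hAt, ← hAK, hD0, Matrix.mul_zero, Matrix.zero_mul]
  -- the scaled versions of Q and S
  set Qh : Matrix (Fin n) (Fin n) ℝ := ex * Q * ex with hQhdef
  set Sh : Matrix (Fin r) (Fin n) ℝ := eν * S * ex with hShdef
  set Sht : Matrix (Fin n) (Fin r) ℝ := ex * Sᵀ * eν with hShtdef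
  have hShT : Shᵀ = Sht := by
    rw [hShdef, hShtdef, Matrix.transpose_mul, Matrix.transpose_mul, hext, heνt,
      Matrix.mul_assoc]
  have hQht : Qhᵀ = Qh := by
    rw [hQhdef, Matrix.transpose_mul, Matrix.transpose_mul, hext, hQt, Matrix.mul_assoc]
  set G : Matrix (Fin n ⊕ Fin r) (Fin n ⊕ Fin r) ℝ := Matrix.fromBlocks Qh 0 0 0 with hGdef
  set J : Matrix (Fin n ⊕ Fin r) (Fin n ⊕ Fin r) ℝ := Matrix.fromBlocks 0 (-Sht) Sh 0
    with hJdef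
  have hGt : Gᵀ = G := by
    rw [hGdef, Matrix.fromBlocks_transpose, hQht, Matrix.transpose_zero, Matrix.transpose_zero,
      Matrix.transpose_zero]
  have hL : EB * K * EB = -G + J := by
    rw [hEBdef, hKdef, Matrix.fromBlocks_multiply, Matrix.fromBlocks_multiply, hGdef, hJdef,
      Matrix.fromBlocks_neg, Matrix.fromBlocks_add]
    rw [Matrix.fromBlocks_inj]
    refine ⟨?_, ?_, ?_, ?_⟩
    · rw [hQhdef]
      simp only [Matrix.mul_zero, Matrix.zero_mul, add_zero, zero_add, Matrix.mul_neg,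
        Matrix.neg_mul, neg_zero, Matrix.mul_assoc]
    · rw [hShtdef]
      simp only [Matrix.mul_zero, Matrix.zero_mul, add_zero, zero_add, Matrix.mul_neg,
        Matrix.neg_mul, neg_zero, Matrix.mul_assoc]
    · rw [hShdef]
      simp only [Matrix.mul_zero, Matrix.zero_mul, add_zero, zero_add, Matrix.mul_assoc,
        neg_zero]
    · simp only [Matrix.mul_zero, Matrix.zero_mul, add_zero, neg_zero, zero_add]
  have hLt : EB * Kᵀ * EB = -G - J := by
    have h := congrArg Matrix.transpose hL
    rw [Matrix.transpose_mul, Matrix.transpose_mul, hEBt, Matrix.transpose_add,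
      Matrix.transpose_neg, hGt] at h
    have hJt : Jᵀ = -J := by
      rw [hJdef, Matrix.fromBlocks_transpose, Matrix.fromBlocks_neg]
      rw [Matrix.fromBlocks_inj]
      exact ⟨by rw [Matrix.transpose_zero, neg_zero],
        by rw [hShT, neg_neg],
        by rw [Matrix.transpose_neg, ← hShT, Matrix.transpose_transpose],
        by rw [Matrix.transpose_zero, neg_zero]⟩
    rw [hJt] at h
    rw [← Matrix.mul_assoc] at h
    rw [h]
    abel
  have h1 : G * W + W * G = W * J - J * W := by
    have hsplit : G * W + W * G = (W * J - J * W) - ((-G - J) * W + W * (-G + J)) := by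
      noncomm_ring
    rw [hsplit, ← hLt, ← hL, key, sub_zero]
  -- trace argument
  set N : Matrix (Fin n) (Fin n ⊕ Fin r) ℝ := Matrix.fromCols (B * ex) 0 with hNdef
  have hGN : G = Nᵀ * N := by
    rw [hNdef, Matrix.transpose_fromCols, Matrix.transpose_zero,
      Matrix.fromRows_mul_fromCols, Matrix.mul_zero, Matrix.zero_mul, Matrix.zero_mul,
      hGdef]
    congr 1
    rw [Matrix.transpose_mul, hext, hBt, hQhdef, ← hBB]
    simp only [Matrix.mul_assoc]
  have htr : Matrix.trace (W * G * W) = 0 := by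
    have h2 := congrArg (fun Z => Matrix.trace (Z * W)) h1
    simp only [Matrix.add_mul, Matrix.sub_mul, Matrix.trace_add, Matrix.trace_sub] at h2
    have e1 : Matrix.trace (G * W * W) = Matrix.trace (W * G * W) := by
      rw [Matrix.trace_mul_comm (G * W) W, ← Matrix.mul_assoc W G W]
    have e2 : Matrix.trace (W * J * W) = Matrix.trace (J * W * W) := by
      rw [Matrix.trace_mul_comm (W * J) W, ← Matrix.mul_assoc W W J,
        Matrix.trace_mul_comm (W * W) J, ← Matrix.mul_assoc J W W]
    rw [e1, e2, sub_self] at h2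
    linarith
  have hNW : N * W = 0 := by
    apply aux_trace_zero
    have : (N * W)ᵀ * (N * W) = W * G * W := by
      rw [Matrix.transpose_mul, hWt, hGN]
      simp only [Matrix.mul_assoc]
    rw [this, htr]
  have hGW : G * W = 0 := by rw [hGN, Matrix.mul_assoc, hNW, Matrix.mul_zero]
  have hWG : W * G = 0 := by
    have h := congrArg Matrix.transpose hGW
    rwa [Matrix.transpose_mul, hWt, hGt, Matrix.transpose_zero] at h
  have hWJ : W * J = J * W := by
    have h := h1
    rw [hGW, hWG, add_zero] at h
    exact (sub_eq_zero.mp h.symm)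
  -- extract the blocks of W
  set W1 := W.toBlocks₁₁ with hW1def
  set W2 := W.toBlocks₁₂ with hW2def
  set W3 := W.toBlocks₂₁ with hW3def
  set W4 := W.toBlocks₂₂ with hW4def
  have hWb : W = Matrix.fromBlocks W1 W2 W3 W4 := (Matrix.fromBlocks_toBlocks W).symm
  have hGWb := hGW
  rw [hWb, hGdef, Matrix.fromBlocks_multiply] at hGWb
  rw [show (0 : Matrix (Fin n ⊕ Fin r) (Fin n ⊕ Fin r) ℝ)
      = Matrix.fromBlocks 0 0 0 0 from Matrix.fromBlocks_zero.symm] at hGWb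
  rw [Matrix.fromBlocks_inj] at hGWb
  obtain ⟨hb1, hb2, -, -⟩ := hGWb
  have hQhW1 : Qh * W1 = 0 := by rw [← hb1]; rw [Matrix.zero_mul, add_zero]
  have hQhW2 : Qh * W2 = 0 := by rw [← hb2]; rw [Matrix.zero_mul, add_zero]
  have hW1z : W1 = 0 := by
    rw [hQhdef, Matrix.mul_assoc, Matrix.mul_assoc] at hQhW1
    exact aux_cancel_left hexdet (aux_cancel_left hQdet (aux_cancel_left hexdet hQhW1))
  have hW2z : W2 = 0 := by
    rw [hQhdef, Matrix.mul_assoc, Matrix.mul_assoc] at hQhW2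
    exact aux_cancel_left hexdet (aux_cancel_left hQdet (aux_cancel_left hexdet hQhW2))
  have hW3z : W3 = 0 := by
    have h := hWt
    rw [hWb, Matrix.fromBlocks_transpose, Matrix.fromBlocks_inj] at h
    obtain ⟨-, -, h23, -⟩ := h
    rw [← h23, hW2z, Matrix.transpose_zero]
  -- now exploit W * J = J * W
  have hWJb := hWJ
  rw [hWb, hW1z, hW2z, hW3z, hJdef, Matrix.fromBlocks_multiply,
    Matrix.fromBlocks_multiply, Matrix.fromBlocks_inj] at hWJb
  obtain ⟨-, hb12, -, -⟩ := hWJb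
  have hShtW4 : Sht * W4 = 0 := by
    have h := hb12
    simp only [Matrix.zero_mul, Matrix.mul_zero, add_zero, zero_add, Matrix.neg_mul,
      Matrix.mul_neg, neg_zero] at h
    exact neg_eq_zero.mp h.symm
  have hW4z : W4 = 0 := by
    rw [hShtdef, Matrix.mul_assoc, Matrix.mul_assoc] at hShtW4
    have h2 : Sᵀ * (eν * W4) = 0 := aux_cancel_left hexdet hShtW4
    have h3 : eν * W4 = 0 := aux_full_rank_cancel hS h2
    exact aux_cancel_left heνdet h3
  have hWz : W = 0 := by
    rw [hWb, hW1z, hW2z, hW3z, hW4z]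
    exact Matrix.fromBlocks_zero
  have hDz : D = 0 := by
    have h : D = FB * W * FB := by
      rw [hWdef]
      have : FB * (EB * D * EB) * FB = (FB * EB) * D * (EB * FB) := by
        simp only [Matrix.mul_assoc]
      rw [this, hFE, hEF, Matrix.one_mul, Matrix.mul_one]
    rw [h, hWz, Matrix.mul_zero, Matrix.zero_mul]
  have := sub_eq_zero.mp (hDdef ▸ hDz)
  exact this
end

section
/- Let Q ∈ ℝ^{n×n} be symmetric positive definite, let S ∈ ℝ^{r×n} be any matrix, let T_x ∈ ℝ^{n×n} and T_ν ∈ ℝ^{r×r} be diagonal positive definite, and let ε > 0. Then the regularized saddle-point system matrix A_reg = [[−T_x⁻¹Q, −T_x⁻¹Sᵀ], [T_ν⁻¹S, −ε T_ν⁻¹]] is Hurwitz, i.e., every complex eigenvalue of A_reg has strictly negative real part. -/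
open Matrix

namespace SaddleAux
variable {m l : Type*} [Fintype m] [Fintype l]

/-- real part of the complex quadratic form of a mapped real matrix -/
lemma re_quad (R : Matrix m m ℝ) (v : m → ℂ) :
    (star v ⬝ᵥ (R.map Complex.ofReal) *ᵥ v).re
      = (fun i => (v i).re) ⬝ᵥ R *ᵥ (fun i => (v i).re)
        + (fun i => (v i).im) ⬝ᵥ R *ᵥ (fun i => (v i).im) := by
  simp only [dotProduct, mulVec, map_apply, Pi.star_apply]
  rw [← Finset.sum_add_distrib, Complex.re_sum]
  refine Finset.sum_congr rfl fun i _ => ?_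
  rw [Finset.mul_sum, Complex.re_sum, Finset.mul_sum, Finset.mul_sum,
    ← Finset.sum_add_distrib]
  refine Finset.sum_congr rfl fun j _ => ?_
  simp [Complex.mul_re, Complex.mul_im]
  try ring

lemma quad_pos {R : Matrix m m ℝ} (hR : R.PosDef) {x : m → ℝ} (hx : x ≠ 0) :
    0 < x ⬝ᵥ R *ᵥ x := by
  simpa using hR.dotProduct_mulVec_pos hx

lemma quad_nonneg {R : Matrix m m ℝ} (hR : R.PosDef) (x : m → ℝ) :
    0 ≤ x ⬝ᵥ R *ᵥ x := by
  simpa using hR.posSemidef.dotProduct_mulVec_nonneg x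

lemma re_quad_pos {R : Matrix m m ℝ} (hR : R.PosDef) {v : m → ℂ} (hv : v ≠ 0) :
    0 < (star v ⬝ᵥ (R.map Complex.ofReal) *ᵥ v).re := by
  rw [re_quad]
  have hne : (fun i => (v i).re) ≠ 0 ∨ (fun i => (v i).im) ≠ 0 := by
    by_contra h
    push_neg at h
    apply hv
    funext i
    have h1 := congrFun h.1 i
    have h2 := congrFun h.2 i
    simp only [Pi.zero_apply] at h1 h2
    exact Complex.ext h1 h2
  rcases hne with h | h
  · exact add_pos_of_pos_of_nonneg (quad_pos hR h) (quad_nonneg hR _)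
  · exact add_pos_of_nonneg_of_pos (quad_nonneg hR _) (quad_pos hR h)

lemma posdef_blockdiag {P : Matrix m m ℝ} {R : Matrix l l ℝ}
    (hP : P.PosDef) (hR : R.PosDef) :
    (Matrix.fromBlocks P 0 0 R).PosDef := by
  rw [Matrix.posDef_iff_dotProduct_mulVec]
  constructor
  · rw [Matrix.IsHermitian, Matrix.fromBlocks_conjTranspose]
    simp only [Matrix.conjTranspose_zero]
    rw [hP.1.eq, hR.1.eq]
  · intro x hx
    have hxeq : x = Sum.elim (x ∘ Sum.inl) (x ∘ Sum.inr) := (Sum.elim_comp_inl_inr x).symm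
    rw [hxeq, Matrix.fromBlocks_mulVec]
    simp only [Matrix.zero_mulVec, add_zero, zero_add, star_trivial]
    rw [sumElim_dotProduct_sumElim]
    have hne : (x ∘ Sum.inl) ≠ 0 ∨ (x ∘ Sum.inr) ≠ 0 := by
      by_contra h
      push_neg at h
      apply hx
      funext i
      cases i with
      | inl i => exact congrFun h.1 i
      | inr i => exact congrFun h.2 i
    rcases hne with h | h
    · exact add_pos_of_pos_of_nonneg (quad_pos hP h) (quad_nonneg hR _)
    · exact add_pos_of_nonneg_of_pos (quad_nonneg hP _) (quad_pos hR h)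

lemma smul_one_posdef {ε : ℝ} (hε : 0 < ε) [DecidableEq l] :
    (ε • (1 : Matrix l l ℝ)).PosDef := by
  rw [Matrix.posDef_iff_dotProduct_mulVec]
  constructor
  · rw [Matrix.IsHermitian]
    simp
  · intro x hx
    rw [Matrix.smul_mulVec, Matrix.one_mulVec, dotProduct_smul, star_trivial]
    have : 0 < x ⬝ᵥ x := by
      have h := (dotProduct_self_star_pos_iff (v := x)).mpr hx
      simpa using h
    simpa using mul_pos hε this

lemma im_quad_zero {A : Matrix m m ℂ} (hA : A.IsHermitian) (v : m → ℂ) :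
    (star v ⬝ᵥ A *ᵥ v).im = 0 := by
  rw [← Complex.conj_eq_iff_im]
  calc (starRingEnd ℂ) (star v ⬝ᵥ A *ᵥ v)
      = star (star v ⬝ᵥ A *ᵥ v) := rfl
    _ = star (A *ᵥ v) ⬝ᵥ v := by rw [star_dotProduct]; simp
    _ = (star v ᵥ* Aᴴ) ⬝ᵥ v := by rw [star_mulVec]
    _ = star v ⬝ᵥ Aᴴ *ᵥ v := (dotProduct_mulVec _ _ _).symm
    _ = star v ⬝ᵥ A *ᵥ v := by rw [hA.eq]

lemma conj_quad {A : Matrix m m ℂ} (v : m → ℂ) :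
    star (star v ⬝ᵥ A *ᵥ v) = star v ⬝ᵥ Aᴴ *ᵥ v := by
  calc star (star v ⬝ᵥ A *ᵥ v)
      = star (A *ᵥ v) ⬝ᵥ v := by rw [star_dotProduct]; simp
    _ = (star v ᵥ* Aᴴ) ⬝ᵥ v := by rw [star_mulVec]
    _ = star v ⬝ᵥ Aᴴ *ᵥ v := (dotProduct_mulVec _ _ _).symm

end SaddleAux


open SaddleAux in
/-- The regularized saddle-point system matrix
`A_reg = [[−Tx⁻¹Q, −Tx⁻¹Sᵀ], [Tν⁻¹S, −ε Tν⁻¹]]` is Hurwitz. -/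
theorem regularized_saddle_point_matrix_hurwitz
    (n r : ℕ)
    (Q : Matrix (Fin n) (Fin n) ℝ) (hQ : Q.PosDef)
    (S : Matrix (Fin r) (Fin n) ℝ)
    (Tx : Matrix (Fin n) (Fin n) ℝ) (hTxd : Tx.IsDiag) (hTx : Tx.PosDef)
    (Tν : Matrix (Fin r) (Fin r) ℝ) (hTνd : Tν.IsDiag) (hTν : Tν.PosDef)
    (ε : ℝ) (hε : 0 < ε) :
    ∀ μ ∈ spectrum ℂ
        ((Matrix.fromBlocks (-(Tx⁻¹ * Q)) (-(Tx⁻¹ * Sᵀ)) (Tν⁻¹ * S)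
          (-(ε • Tν⁻¹))).map Complex.ofReal),
      μ.re < 0 := by
  classical
  intro μ hμ
  set A : Matrix (Fin n ⊕ Fin r) (Fin n ⊕ Fin r) ℝ :=
    Matrix.fromBlocks (-(Tx⁻¹ * Q)) (-(Tx⁻¹ * Sᵀ)) (Tν⁻¹ * S) (-(ε • Tν⁻¹)) with hA
  set M := A.map Complex.ofReal with hM
  -- extract an eigenvector
  rw [spectrum.mem_iff, Algebra.algebraMap_eq_smul_one] at hμ
  have hdet : (μ • (1 : Matrix (Fin n ⊕ Fin r) (Fin n ⊕ Fin r) ℂ) - M).det = 0 := by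
    by_contra h
    exact hμ ((Matrix.isUnit_iff_isUnit_det _).mpr (isUnit_iff_ne_zero.mpr h))
  obtain ⟨v, hv0, hv⟩ := (Matrix.exists_mulVec_eq_zero_iff).mpr hdet
  have hMv : M *ᵥ v = μ • v := by
    rw [Matrix.sub_mulVec, Matrix.smul_mulVec, Matrix.one_mulVec, sub_eq_zero] at hv
    exact hv.symm
  -- the block matrices
  have hTxu : Tx * Tx⁻¹ = 1 := Matrix.mul_nonsing_inv _ hTx.det_pos.ne'.isUnit
  have hTνu : Tν * Tν⁻¹ = 1 := Matrix.mul_nonsing_inv _ hTν.det_pos.ne'.isUnit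
  set T : Matrix (Fin n ⊕ Fin r) (Fin n ⊕ Fin r) ℝ := Matrix.fromBlocks Tx 0 0 Tν with hT
  set B : Matrix (Fin n ⊕ Fin r) (Fin n ⊕ Fin r) ℝ :=
    Matrix.fromBlocks (-Q) (-Sᵀ) S (-(ε • (1 : Matrix (Fin r) (Fin r) ℝ))) with hB
  set D : Matrix (Fin n ⊕ Fin r) (Fin n ⊕ Fin r) ℝ :=
    Matrix.fromBlocks Q 0 0 (ε • (1 : Matrix (Fin r) (Fin r) ℝ)) with hD
  have hTA : T * A = B := by
    rw [hT, hA, hB, Matrix.fromBlocks_multiply]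
    simp [Matrix.mul_neg, Matrix.mul_smul, ← Matrix.mul_assoc, hTxu, hTνu]
  have hsemiconj : Function.Semiconj Complex.ofReal (star : ℝ → ℝ) star := by
    intro a
    simp [Complex.conj_ofReal]
  have hTB : (T.map Complex.ofReal) * M = B.map Complex.ofReal := by
    rw [hM, ← hTA]
    exact (Matrix.map_mul (f := Complex.ofRealHom)).symm
  set t : ℂ := star v ⬝ᵥ (T.map Complex.ofReal) *ᵥ v with ht
  set q : ℂ := star v ⬝ᵥ (B.map Complex.ofReal) *ᵥ v with hq
  have hqt : q = μ * t := by
    rw [hq, ht, ← hTB, ← Matrix.mulVec_mulVec, hMv, Matrix.mulVec_smul, dotProduct_smul,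
      smul_eq_mul]
  have hTpos : T.PosDef := posdef_blockdiag hTx hTν
  have hDpos : D.PosDef := posdef_blockdiag hQ (smul_one_posdef hε)
  have htre : 0 < t.re := re_quad_pos hTpos hv0
  have htim : t.im = 0 := im_quad_zero (hTpos.1.map _ hsemiconj) v
  -- symmetrization
  have hQsym : ∀ i j, Q j i = Q i j := by
    intro i j
    have := congrFun (congrFun hQ.1.eq i) j
    simpa using this
  have hBBt : B + Bᵀ = -(D + D) := by
    ext i j
    rcases i with i | i <;> rcases j with j | j
    · simp only [hB, hD, Matrix.add_apply, Matrix.neg_apply, Matrix.transpose_apply,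
        Matrix.fromBlocks_apply₁₁, hQsym i j]
      ring
    · simp [hB, hD]
    · simp [hB, hD]
    · simp only [hB, hD, Matrix.add_apply, Matrix.neg_apply, Matrix.transpose_apply,
        Matrix.fromBlocks_apply₂₂, Matrix.smul_apply, Matrix.one_apply, smul_eq_mul]
      by_cases h : i = j <;> simp [h, eq_comm] <;> ring
  have hconjmap : (B.map Complex.ofReal)ᴴ = Bᵀ.map Complex.ofReal := by
    rw [← Matrix.conjTranspose_map Complex.ofReal hsemiconj,
      Matrix.conjTranspose_eq_transpose_of_trivial]
  have hsum : q + star q = star v ⬝ᵥ ((-(D + D)).map Complex.ofReal) *ᵥ v := by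
    rw [hq, conj_quad, hconjmap, ← dotProduct_add, ← Matrix.add_mulVec,
      ← Matrix.map_add _ (by simp) _ _, hBBt]
  have hqre : 2 * q.re = -2 * (star v ⬝ᵥ (D.map Complex.ofReal) *ᵥ v).re := by
    have h1 : (q + star q).re = 2 * q.re := by
      simp [Complex.add_re]
      ring
    have h2 : ((-(D + D)).map Complex.ofReal) = -((D.map Complex.ofReal) + (D.map Complex.ofReal)) := by
      ext i j
      simp
    rw [← h1, hsum, h2]
    simp [Matrix.neg_mulVec, Matrix.add_mulVec, dotProduct_add]
    ring
  have hDre : 0 < (star v ⬝ᵥ (D.map Complex.ofReal) *ᵥ v).re := re_quad_pos hDpos hv0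
  have hqre_neg : q.re < 0 := by linarith
  have hfin : q.re = μ.re * t.re := by
    rw [hqt, Complex.mul_re, htim]
    ring
  by_contra hcon
  push_neg at hcon
  nlinarith
end

section
/- Let n ≥ 1, let q, τ̄_x, τ̄_ν, ε, t_c, t_b be positive reals, and let S ∈ ℝ^{1×n} be a nonzero row vector with s = ‖S‖₂. Set Q = q·I_n, A_reg = [[−(q/τ̄_x) I_n, −(1/τ̄_x) Sᵀ], [(1/τ̄_ν) S, −ε/τ̄_ν]], B = [[(t_c/τ̄_x) I_n, 0], [0, t_b/τ̄_ν]], C = [√q·I_n, 0], and X = (1/2)·blkdiag(τ̄_x I_n, τ̄_ν). Let X_ε be the unique symmetric solution of A_regᵀ X_ε + X_ε A_reg + CᵀC = 0. Then Tr(BᵀXB) − Tr(Bᵀ X_ε B) = α_ε t_c² + γ_ε t_b², where α_ε = ε s² / (2(εq + s²)(ε τ̄_x + q τ̄_ν)) and γ_ε = ε(τ̄_x q ε + q² τ̄_ν + τ̄_x s²) / (2 τ̄_ν (εq + s²)(ε τ̄_x + q τ̄_ν)). -/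
open Matrix

lemma trace_mul_fin_one' (M N : Matrix (Fin 1) (Fin 1) ℝ) :
    (M * N).trace = M.trace * N.trace := by
  simp [Matrix.trace, Matrix.mul_apply]

lemma trace_fromBlocks' {n m : Type*} [Fintype n] [Fintype m]
    (A : Matrix n n ℝ) (B : Matrix n m ℝ) (C : Matrix m n ℝ) (D : Matrix m m ℝ) :
    (Matrix.fromBlocks A B C D).trace = A.trace + D.trace := by
  simp [Matrix.trace, Fintype.sum_sum_type, Matrix.fromBlocks]


set_option maxHeartbeats 2000000 in
/-- single-constraint, uniform parameters. With
`X = (1/2)·blkdiag(τx I_n, τν)` the unregularized Gramian and `X_ε` the unique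
symmetric solution of the regularized Lyapunov equation,
`Tr(BᵀXB) − Tr(Bᵀ X_ε B) = α_ε t_c² + γ_ε t_b²`. -/
theorem regularized_saddle_point_performance_gap
    (n : ℕ) (hn : 1 ≤ n)
    (q τx τν ε tc tb : ℝ)
    (hq : 0 < q) (hτx : 0 < τx) (hτν : 0 < τν) (hε : 0 < ε)
    (htc : 0 < tc) (htb : 0 < tb)
    (S : Matrix (Fin 1) (Fin n) ℝ) (hSne : S ≠ 0)
    (s : ℝ) (hs : s = Real.sqrt ((S * Sᵀ).trace))
    (Areg : Matrix (Fin n ⊕ Fin 1) (Fin n ⊕ Fin 1) ℝ)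
    (hAreg : Areg = Matrix.fromBlocks
      ((-(q / τx)) • (1 : Matrix (Fin n) (Fin n) ℝ)) ((-(1 / τx)) • Sᵀ)
      ((1 / τν) • S) ((-(ε / τν)) • (1 : Matrix (Fin 1) (Fin 1) ℝ)))
    (B : Matrix (Fin n ⊕ Fin 1) (Fin n ⊕ Fin 1) ℝ)
    (hB : B = Matrix.fromBlocks
      ((tc / τx) • (1 : Matrix (Fin n) (Fin n) ℝ)) 0
      0 ((tb / τν) • (1 : Matrix (Fin 1) (Fin 1) ℝ)))
    (C : Matrix (Fin n) (Fin n ⊕ Fin 1) ℝ)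
    (hC : C = Matrix.fromCols
      (Real.sqrt q • (1 : Matrix (Fin n) (Fin n) ℝ)) 0)
    (X : Matrix (Fin n ⊕ Fin 1) (Fin n ⊕ Fin 1) ℝ)
    (hX : X = (1 / 2 : ℝ) • Matrix.fromBlocks
      (τx • (1 : Matrix (Fin n) (Fin n) ℝ)) 0
      0 (τν • (1 : Matrix (Fin 1) (Fin 1) ℝ)))
    (Xε : Matrix (Fin n ⊕ Fin 1) (Fin n ⊕ Fin 1) ℝ)
    (hXεsymm : Xε.IsSymm)
    (hXε : Aregᵀ * Xε + Xε * Areg + Cᵀ * C = 0) :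
    (Bᵀ * X * B).trace - (Bᵀ * Xε * B).trace =
      (ε * s ^ 2 / (2 * (ε * q + s ^ 2) * (ε * τx + q * τν))) * tc ^ 2 +
      (ε * (τx * q * ε + q ^ 2 * τν + τx * s ^ 2) /
        (2 * τν * (ε * q + s ^ 2) * (ε * τx + q * τν))) * tb ^ 2 := by
  subst hAreg hB hC hX
  set P := Xε.toBlocks₁₁ with hP
  set p := Xε.toBlocks₁₂ with hp
  set p' := Xε.toBlocks₂₁ with hp'
  set W := Xε.toBlocks₂₂ with hW
  have hXeb : Xε = fromBlocks P p p' W := (fromBlocks_toBlocks Xε).symm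
  have hp'p : p' = pᵀ := by
    ext i j
    exact (hXεsymm.apply (Sum.inr i) (Sum.inl j)).symm
  -- scalar abbreviations
  set s2 := (S * Sᵀ).trace with hs2
  set T := P.trace with hT
  set u := (S * p).trace with hu
  set v := (S * P * Sᵀ).trace with hv
  set w := W.trace with hw
  have hs2' : s2 = ∑ j, S 0 j * S 0 j := by
    simp [hs2, Matrix.trace, Matrix.mul_apply, Fin.sum_univ_one]
  have hs2nn : 0 ≤ s2 := by
    rw [hs2']
    exact Finset.sum_nonneg fun j _ => mul_self_nonneg _
  have hss : s ^ 2 = s2 := by rw [hs]; exact Real.sq_sqrt hs2nn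
  -- block equations
  have h0 := hXε
  rw [hXeb] at h0
  simp only [fromBlocks_transpose, transpose_fromCols, transpose_smul, transpose_one,
    transpose_zero, transpose_transpose, fromRows_mul_fromCols, fromBlocks_multiply,
    fromBlocks_add] at h0
  rw [show (0 : Matrix (Fin n ⊕ Fin 1) (Fin n ⊕ Fin 1) ℝ) = fromBlocks 0 0 0 0 from
    fromBlocks_zero.symm, fromBlocks_inj] at h0
  obtain ⟨h11, h12, _, h22⟩ := h0
  simp only [hp'p] at h11 h12 h22
  -- scalar equations
  have e1 := congrArg Matrix.trace h11
  simp only [trace_add, smul_mul_assoc, mul_smul_comm, Matrix.smul_mul, Matrix.mul_smul,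
    one_mul, mul_one, trace_smul, smul_eq_mul, smul_smul, trace_zero, trace_one,
    show Sᵀ * pᵀ = (p * S)ᵀ from (transpose_mul p S).symm, trace_transpose,
    trace_mul_comm p S, Real.mul_self_sqrt hq.le] at e1
  have e2 := congrArg (fun M => (S * M * Sᵀ).trace) h11
  simp only [Matrix.mul_add, Matrix.add_mul, Matrix.mul_smul, Matrix.smul_mul, trace_add,
    trace_smul, smul_eq_mul, smul_smul, Matrix.mul_zero, Matrix.zero_mul, trace_zero,
    Real.mul_self_sqrt hq.le, Matrix.mul_one, Matrix.one_mul, smul_mul_assoc, mul_smul_comm] at e2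
  have e3 := congrArg (fun M => (S * M).trace) h12
  simp only [Matrix.mul_add, Matrix.mul_smul, Matrix.smul_mul, trace_add, trace_smul,
    smul_eq_mul, smul_smul, Matrix.mul_zero, trace_zero, Matrix.mul_one, Matrix.one_mul,
    smul_mul_assoc, mul_smul_comm] at e3
  have e4 := congrArg Matrix.trace h22
  simp only [trace_add, trace_smul, smul_eq_mul, smul_smul, trace_zero, Matrix.mul_one,
    Matrix.one_mul, smul_mul_assoc, mul_smul_comm, Matrix.smul_mul, Matrix.mul_smul,
    Matrix.zero_mul, Matrix.mul_zero,
    show pᵀ * Sᵀ = (S * p)ᵀ from (transpose_mul S p).symm, trace_transpose] at e4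
  -- normalize 1×1 trace products
  have m2a : (S * (Sᵀ * pᵀ) * Sᵀ).trace = s2 * u := by
    rw [← Matrix.mul_assoc S Sᵀ pᵀ, Matrix.mul_assoc (S * Sᵀ) pᵀ Sᵀ, trace_mul_fin_one',
      ← transpose_mul, trace_transpose]
  have m2b : (S * (p * S) * Sᵀ).trace = u * s2 := by
    rw [← Matrix.mul_assoc S p S, Matrix.mul_assoc (S * p) S Sᵀ, trace_mul_fin_one']
  have m3a : (S * (Sᵀ * W)).trace = s2 * w := by
    rw [← Matrix.mul_assoc S Sᵀ W, trace_mul_fin_one']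
  have m3b : (S * (P * Sᵀ)).trace = v := by rw [← Matrix.mul_assoc]
  simp only [m2a, m2b, m3a, m3b, Fintype.card_fin] at e1 e2 e3 e4
  -- clean scalar equations
  have E1 : 2 * q * τν * T = 2 * τx * u + q * n * τx * τν := by
    field_simp at e1 ⊢
    linarith
  have E2 : 2 * q * τν * v = 2 * τx * s2 * u + q * s2 * τx * τν := by
    field_simp at e2 ⊢
    linarith
  have E3 : q * τν * u + ε * τx * u + τν * v = s2 * τx * w := by
    field_simp at e3 ⊢
    linarith
  have E4 : ε * τx * w = -(τν * u) := by
    field_simp at e4 ⊢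
    linarith
  -- eliminate u
  have hu' : u * (2*(ε*q+s2)*(q*τν+ε*τx)) = -(ε*q*s2*τx*τν) := by
    linear_combination (-ε)*E2 + (2*q*ε)*E3 + (2*q*s2)*E4
  have hDpos : (0:ℝ) < 2*(ε*q+s2)*(q*τν+ε*τx) := by positivity
  have hD : (2*(ε*q+s2)*(q*τν+ε*τx)) ≠ 0 := ne_of_gt hDpos
  have huval : u = -(ε*q*s2*τx*τν)/(2*(ε*q+s2)*(q*τν+ε*τx)) := by
    rw [eq_div_iff hD]; linear_combination hu'
  have hw2 : w * (2*(ε*q+s2)*(q*τν+ε*τx)) * (ε*τx) = q*s2*τν^2 * (ε*τx) := by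
    linear_combination (2*(ε*q+s2)*(q*τν+ε*τx))*E4 - τν*hu'
  have hwval : w = (q*s2*τν^2)/(2*(ε*q+s2)*(q*τν+ε*τx)) := by
    rw [eq_div_iff hD]
    exact mul_right_cancel₀ (by positivity) hw2
  have hTval : T = τx*(n:ℝ)/2 + τx*u/(q*τν) := by
    field_simp
    linarith
  -- trace computations
  rw [hXeb, hp'p]
  have hg1 : ((fromBlocks ((tc / τx) • (1 : Matrix (Fin n) (Fin n) ℝ)) 0 0
        ((tb / τν) • (1 : Matrix (Fin 1) (Fin 1) ℝ)))ᵀ *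
      ((1 / 2 : ℝ) • fromBlocks (τx • (1 : Matrix (Fin n) (Fin n) ℝ)) 0 0
        (τν • (1 : Matrix (Fin 1) (Fin 1) ℝ))) *
      (fromBlocks ((tc / τx) • (1 : Matrix (Fin n) (Fin n) ℝ)) 0 0
        ((tb / τν) • (1 : Matrix (Fin 1) (Fin 1) ℝ)))).trace
      = (tc/τx)^2 * (τx*(n:ℝ)/2) + (tb/τν)^2 * (τν/2) := by
    simp only [fromBlocks_transpose, transpose_smul, transpose_one, transpose_zero,
      fromBlocks_smul, Matrix.smul_mul, Matrix.mul_smul, fromBlocks_multiply,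
      smul_smul, Matrix.one_mul, Matrix.mul_one, smul_zero, Matrix.zero_mul,
      Matrix.mul_zero, zero_add, add_zero, smul_zero,
      trace_fromBlocks', trace_smul, trace_one, trace_zero, smul_eq_mul,
      Fintype.card_fin, Fintype.card_unique]
    push_cast
    field_simp
  have hg2 : ((fromBlocks ((tc / τx) • (1 : Matrix (Fin n) (Fin n) ℝ)) 0 0
        ((tb / τν) • (1 : Matrix (Fin 1) (Fin 1) ℝ)))ᵀ *
      (fromBlocks P p pᵀ W) *
      (fromBlocks ((tc / τx) • (1 : Matrix (Fin n) (Fin n) ℝ)) 0 0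
        ((tb / τν) • (1 : Matrix (Fin 1) (Fin 1) ℝ)))).trace
      = (tc/τx)^2 * T + (tb/τν)^2 * w := by
    simp only [fromBlocks_transpose, transpose_smul, transpose_one, transpose_zero,
      Matrix.smul_mul, Matrix.mul_smul, fromBlocks_multiply,
      smul_smul, Matrix.one_mul, Matrix.mul_one, smul_zero, Matrix.zero_mul,
      Matrix.mul_zero, zero_add, add_zero, smul_zero, trace_add,
      trace_fromBlocks', trace_smul, trace_zero, smul_eq_mul]
    rw [hT, hw]
    ring
  rw [hg1, hg2, hss, hTval, hwval, huval]
  have h1 : ε*q + s2 > 0 := by positivity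
  have h2 : ε*τx + q*τν > 0 := by positivity
  field_simp
  ring
end

section
/- Let Q ∈ ℝ^{n×n} be symmetric positive definite, let S ∈ ℝ^{r×n} have full row rank with r ≤ n, let W_b ∈ ℝ^{r×m}, let T_ν ∈ ℝ^{r×r} be diagonal positive definite, and let t_b ≥ 0. Define A_dual = −T_ν⁻¹ S Q⁻¹ Sᵀ, B_dual = t_b T_ν⁻¹ W_b, and C_dual = −Q^{−1/2} Sᵀ. Then X = (1/2) T_ν is the unique symmetric solution of the Lyapunov equation A_dualᵀ X + X A_dual + C_dualᵀ C_dual = 0, and Tr(B_dualᵀ X B_dual) = (t_b²/2)·Tr(W_bᵀ T_ν⁻¹ W_b). That is, the squared H₂ norm of the input-output dual ascent dynamics equals (t_b²/2)·Tr(W_bᵀ T_ν⁻¹ W_b). -/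
open Matrix

lemma aux_sq_sum_zero {k l : ℕ} (A : Matrix (Fin k) (Fin l) ℝ)
    (h : (Aᵀ * A).trace = 0) : A = 0 := by
  have key : ∑ j : Fin l, ∑ i : Fin k, A i j ^ 2 = 0 := by
    rw [← h]
    simp [Matrix.trace, Matrix.mul_apply, Matrix.diag, sq]
  have h1 : ∀ j ∈ Finset.univ, (∑ i : Fin k, A i j ^ 2) = 0 :=
    (Finset.sum_eq_zero_iff_of_nonneg
      (fun j _ => Finset.sum_nonneg fun i _ => sq_nonneg _)).mp key
  ext i j
  have h2 := (Finset.sum_eq_zero_iff_of_nonneg (fun i _ => sq_nonneg (A i j))).mp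
    (h1 j (Finset.mem_univ j)) i (Finset.mem_univ i)
  simpa using pow_eq_zero_iff (n := 2) (by norm_num) |>.mp h2

open scoped MatrixOrder in
lemma aux_psd_cancel {k : ℕ} {M E : Matrix (Fin k) (Fin k) ℝ} (hM : M.PosDef)
    (hE : Eᵀ = E) (h : M * E + E * M = 0) : E = 0 := by
  set L := CFC.sqrt M with hLdef
  have hL : L * L = M := CFC.sqrt_mul_sqrt_self M hM.posSemidef.nonneg
  have hLt : Lᵀ = L := by
    have := (CFC.sqrt_nonneg M).posSemidef.1
    rwa [Matrix.IsHermitian, conjTranspose_eq_transpose_of_trivial] at this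
  have htr : (E * M * E).trace = 0 := by
    have h2 : E * M * E + E * E * M = 0 := by
      have := congrArg (fun X => E * X) h
      simpa [Matrix.mul_add, Matrix.mul_assoc] using this
    have h3 := congrArg Matrix.trace h2
    rw [Matrix.trace_add, Matrix.trace_zero] at h3
    have h4 : (E * E * M).trace = (E * M * E).trace := by
      rw [Matrix.mul_assoc, Matrix.trace_mul_comm, Matrix.mul_assoc]
    linarith
  have hform : (L * E)ᵀ * (L * E) = E * M * E := by
    rw [Matrix.transpose_mul, hLt, hE, Matrix.mul_assoc, ← Matrix.mul_assoc L, hL,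
      ← Matrix.mul_assoc]
  have hLE : L * E = 0 := aux_sq_sum_zero _ (by rw [hform]; exact htr)
  have hdetL : IsUnit L.det := by
    have : L.det * L.det = M.det := by rw [← Matrix.det_mul, hL]
    have hMd := hM.det_pos
    refine isUnit_iff_ne_zero.mpr fun h0 => ?_
    rw [h0, mul_zero] at this
    exact absurd this.symm (ne_of_gt hMd)
  calc E = (L⁻¹ * L) * E := by rw [Matrix.nonsing_inv_mul _ hdetL, Matrix.one_mul]
    _ = L⁻¹ * (L * E) := by rw [Matrix.mul_assoc]
    _ = 0 := by rw [hLE, Matrix.mul_zero]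

lemma aux_mulVec_ne {r n : ℕ} (S : Matrix (Fin r) (Fin n) ℝ) (hS : S.rank = r)
    (x : Fin r → ℝ) (hx : x ≠ 0) : Sᵀ *ᵥ x ≠ 0 := by
  have hrank : Sᵀ.rank = r := by rw [Matrix.rank_transpose, hS]
  have hrn := Sᵀ.mulVecLin.finrank_range_add_finrank_ker
  rw [Module.finrank_pi] at hrn
  simp only [Fintype.card_fin] at hrn
  rw [Matrix.rank] at hrank
  have hker : Module.finrank ℝ (LinearMap.ker Sᵀ.mulVecLin) = 0 := by omega
  have hkerbot : LinearMap.ker Sᵀ.mulVecLin = ⊥ :=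
    Submodule.finrank_eq_zero.mp hker
  intro h0
  have hmem : x ∈ LinearMap.ker Sᵀ.mulVecLin := LinearMap.mem_ker.mpr (by
    rw [Matrix.mulVecLin_apply]; exact h0)
  rw [hkerbot] at hmem
  exact hx (by simpa using hmem)

lemma aux_posdef_conj {k l : ℕ} {A : Matrix (Fin k) (Fin k) ℝ} (hA : A.PosDef)
    (B : Matrix (Fin k) (Fin l) ℝ) (hB : ∀ x : Fin l → ℝ, x ≠ 0 → B *ᵥ x ≠ 0) :
    (Bᴴ * A * B).PosDef := by
  refine Matrix.PosDef.of_dotProduct_mulVec_pos (Matrix.isHermitian_conjTranspose_mul_mul B hA.1) fun x hx => ?_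
  simpa only [star_mulVec, dotProduct_mulVec, vecMul_vecMul] using hA.dotProduct_mulVec_pos (hB x hx)

open scoped MatrixOrder in
/-- `X = (1/2) Tν` is the unique symmetric solution of the
Lyapunov equation for the dual ascent dynamics, and the squared H₂ norm is
`Tr(B_dualᵀ X B_dual) = (t_b²/2)·Tr(Wbᵀ Tν⁻¹ Wb)`. -/
theorem dual_ascent_H2_norm
    (n r m : ℕ) (hrn : r ≤ n)
    (Q : Matrix (Fin n) (Fin n) ℝ) (hQ : Q.PosDef)
    (S : Matrix (Fin r) (Fin n) ℝ) (hS : S.rank = r)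
    (Wb : Matrix (Fin r) (Fin m) ℝ)
    (Tν : Matrix (Fin r) (Fin r) ℝ) (hTνd : Tν.IsDiag) (hTν : Tν.PosDef)
    (tb : ℝ) (htb : 0 ≤ tb)
    (Adual : Matrix (Fin r) (Fin r) ℝ)
    (hAdual : Adual = -(Tν⁻¹ * S * Q⁻¹ * Sᵀ))
    (Bdual : Matrix (Fin r) (Fin m) ℝ)
    (hBdual : Bdual = tb • (Tν⁻¹ * Wb))
    (Cdual : Matrix (Fin n) (Fin r) ℝ)
    (hCdual : Cdual = -((CFC.sqrt Q)⁻¹ * Sᵀ)) :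
    (Adualᵀ * ((1 / 2 : ℝ) • Tν) + ((1 / 2 : ℝ) • Tν) * Adual +
        Cdualᵀ * Cdual = 0) ∧
    (∀ Y : Matrix (Fin r) (Fin r) ℝ,
      Y.IsSymm → Adualᵀ * Y + Y * Adual + Cdualᵀ * Cdual = 0 →
        Y = (1 / 2 : ℝ) • Tν) ∧
    (Bdualᵀ * ((1 / 2 : ℝ) • Tν) * Bdual).trace =
      tb ^ 2 / 2 * (Wbᵀ * Tν⁻¹ * Wb).trace := by
  classical
  -- basic symmetry and invertibility facts
  have hTsym : Tνᵀ = Tν := by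
    have := hTν.1
    rwa [Matrix.IsHermitian, conjTranspose_eq_transpose_of_trivial] at this
  have hTdet : IsUnit Tν.det := isUnit_iff_ne_zero.mpr (ne_of_gt hTν.det_pos)
  have hTmul : Tν * Tν⁻¹ = 1 := Matrix.mul_nonsing_inv _ hTdet
  have hTmul' : Tν⁻¹ * Tν = 1 := Matrix.nonsing_inv_mul _ hTdet
  have hTit : Tν⁻¹ᵀ = Tν⁻¹ := by rw [Matrix.transpose_nonsing_inv, hTsym]
  have hQsym : Qᵀ = Q := by
    have := hQ.1
    rwa [Matrix.IsHermitian, conjTranspose_eq_transpose_of_trivial] at this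
  have hQit : Q⁻¹ᵀ = Q⁻¹ := by rw [Matrix.transpose_nonsing_inv, hQsym]
  set R0 := CFC.sqrt Q with hR0
  have hRR : R0 * R0 = Q := CFC.sqrt_mul_sqrt_self Q hQ.posSemidef.nonneg
  have hRt : R0ᵀ = R0 := by
    have := (CFC.sqrt_nonneg Q).posSemidef.1
    rwa [Matrix.IsHermitian, conjTranspose_eq_transpose_of_trivial] at this
  have hRit : R0⁻¹ᵀ = R0⁻¹ := by rw [Matrix.transpose_nonsing_inv, hRt]
  have hQinv : Q⁻¹ = R0⁻¹ * R0⁻¹ := by rw [← hRR, Matrix.mul_inv_rev]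
  set M := S * Q⁻¹ * Sᵀ with hM
  have hCC : Cdualᵀ * Cdual = M := by
    rw [hCdual]
    simp only [Matrix.transpose_neg, Matrix.transpose_mul, Matrix.transpose_transpose,
      hRit, Matrix.neg_mul, Matrix.mul_neg, neg_neg, hM, hQinv, Matrix.mul_assoc]
  have hMt : Mᵀ = M := by
    simp only [hM, Matrix.transpose_mul, Matrix.transpose_transpose, hQit, Matrix.mul_assoc]
  have hMpd : M.PosDef := by
    have h0 := aux_posdef_conj hQ.inv Sᵀ (aux_mulVec_ne S hS)
    simpa only [conjTranspose_eq_transpose_of_trivial, Matrix.transpose_transpose] using h0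
  have hAt : Adualᵀ = -(M * Tν⁻¹) := by
    rw [hAdual]
    simp only [Matrix.transpose_neg, Matrix.transpose_mul, Matrix.transpose_transpose,
      hTit, hQit, hM, Matrix.mul_assoc]
  have hA2 : Tν⁻¹ * S * Q⁻¹ * Sᵀ = Tν⁻¹ * M := by
    simp only [hM, Matrix.mul_assoc]
  have e1 : M * Tν⁻¹ * ((1 / 2 : ℝ) • Tν) = (1 / 2 : ℝ) • M := by
    rw [Matrix.mul_smul, Matrix.mul_assoc, hTmul', Matrix.mul_one]
  have e2 : ((1 / 2 : ℝ) • Tν) * (Tν⁻¹ * M) = (1 / 2 : ℝ) • M := by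
    rw [Matrix.smul_mul, ← Matrix.mul_assoc, hTmul, Matrix.one_mul]
  refine ⟨?_, ?_, ?_⟩
  · -- the Lyapunov equation holds
    rw [hAt, hAdual, hA2, hCC, Matrix.neg_mul, e1, Matrix.mul_neg, e2]
    module
  · -- uniqueness
    intro Y hYs hYeq
    rw [hAt, hAdual, hA2, hCC, Matrix.neg_mul, Matrix.mul_neg] at hYeq
    have key : M * Tν⁻¹ * Y + Y * (Tν⁻¹ * M) = M := by
      calc M * Tν⁻¹ * Y + Y * (Tν⁻¹ * M)
          = -(-(M * Tν⁻¹ * Y) + -(Y * (Tν⁻¹ * M)) + M) + M := by abel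
        _ = -(0 : Matrix (Fin r) (Fin r) ℝ) + M := by rw [hYeq]
        _ = M := by simp
    set D := Y - (1 / 2 : ℝ) • Tν with hD
    have hDt : Dᵀ = D := by
      rw [hD, Matrix.transpose_sub, Matrix.transpose_smul, hTsym, hYs.eq]
    have hDeq : M * Tν⁻¹ * D + D * (Tν⁻¹ * M) = 0 := by
      have expand : M * Tν⁻¹ * D + D * (Tν⁻¹ * M)
          = (M * Tν⁻¹ * Y + Y * (Tν⁻¹ * M)) - M := by
        rw [hD, Matrix.mul_sub, Matrix.sub_mul, e1, e2]
        module
      rw [expand, key, sub_self]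
    set Rt := CFC.sqrt Tν with hRtdef
    have hRtRt : Rt * Rt = Tν := CFC.sqrt_mul_sqrt_self Tν hTν.posSemidef.nonneg
    have hRtt : Rtᵀ = Rt := by
      have := (CFC.sqrt_nonneg Tν).posSemidef.1
      rwa [Matrix.IsHermitian, conjTranspose_eq_transpose_of_trivial] at this
    have hRtdet : IsUnit Rt.det := by
      have hdd : Rt.det * Rt.det = Tν.det := by rw [← Matrix.det_mul, hRtRt]
      refine isUnit_iff_ne_zero.mpr fun h0 => ?_
      rw [h0, mul_zero] at hdd
      exact absurd hdd.symm (ne_of_gt hTν.det_pos)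
    have hRtit : Rt⁻¹ᵀ = Rt⁻¹ := by rw [Matrix.transpose_nonsing_inv, hRtt]
    have hTinv2 : Tν⁻¹ = Rt⁻¹ * Rt⁻¹ := by rw [← hRtRt, Matrix.mul_inv_rev]
    set M' := Rt⁻¹ * M * Rt⁻¹ with hM'def
    set E := Rt⁻¹ * D * Rt⁻¹ with hEdef
    have hEt : Eᵀ = E := by
      rw [hEdef, Matrix.transpose_mul, Matrix.transpose_mul, hRtit, hDt, Matrix.mul_assoc]
    have hRiNe : ∀ x : Fin r → ℝ, x ≠ 0 → Rt⁻¹ *ᵥ x ≠ 0 := by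
      intro x hx h0
      apply hx
      have : (Rt * Rt⁻¹) *ᵥ x = Rt *ᵥ (Rt⁻¹ *ᵥ x) := by rw [Matrix.mulVec_mulVec]
      rw [Matrix.mul_nonsing_inv _ hRtdet] at this
      rw [Matrix.one_mulVec] at this
      rw [this, h0, Matrix.mulVec_zero]
    have hM'pd : M'.PosDef := by
      have h0 := aux_posdef_conj hMpd Rt⁻¹ hRiNe
      simpa only [conjTranspose_eq_transpose_of_trivial, hRtit] using h0
    have hsum : M' * E + E * M' = 0 := by
      have h5 := congrArg (fun X => Rt⁻¹ * X * Rt⁻¹) hDeq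
      simp only [Matrix.mul_add, Matrix.add_mul, Matrix.mul_zero, Matrix.zero_mul,
        Matrix.mul_assoc] at h5
      simp only [hM'def, hEdef, hTinv2, Matrix.mul_assoc] at h5 ⊢
      exact h5
    have hE0 : E = 0 := aux_psd_cancel hM'pd hEt hsum
    have hD0 : D = 0 := by
      have hback : Rt * E * Rt = D := by
        rw [hEdef, ← Matrix.mul_assoc, ← Matrix.mul_assoc,
          Matrix.mul_nonsing_inv _ hRtdet, Matrix.one_mul, Matrix.mul_assoc,
          Matrix.nonsing_inv_mul _ hRtdet, Matrix.mul_one]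
      rw [← hback, hE0, Matrix.mul_zero, Matrix.zero_mul]
    have := sub_eq_zero.mp hD0
    exact this
  · -- the trace identity
    have e5 : Tν * (Tν⁻¹ * Wb) = Wb := by rw [← Matrix.mul_assoc, hTmul, Matrix.one_mul]
    rw [hBdual]
    simp only [Matrix.transpose_smul, Matrix.transpose_mul, hTit, Matrix.smul_mul,
      Matrix.mul_smul, smul_smul, Matrix.mul_assoc, e5]
    rw [Matrix.trace_smul]
    simp only [smul_eq_mul]
    ring
end

section
/- Let n ≥ 2, let q, τ̄_ν > 0, let 0 = λ₁ < λ₂ ≤ ⋯ ≤ λ_n be reals, and let γ be a real number with 1/√(2τ̄_ν) < γ < √n/√(2τ̄_ν). If ρ ≥ (q/λ₂)·(n − 2τ̄_ν γ²)/(2τ̄_ν γ² − 1), then (1/(2τ̄_ν))·(1 + Σ_{i=2}^{n} q/(q + ρλ_i)) ≤ γ². -/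
/-- sufficient augmentation gain for a desired H₂ level.  If
`ρ ≥ (q/λ₂)·(n − 2τ̄ν γ²)/(2τ̄ν γ² − 1)` then
`(1/(2τ̄ν))(1 + Σ_{i≥2} q/(q+ρλᵢ)) ≤ γ²`. -/
theorem ADD_SP_design_inequality
    (n : ℕ) (hn : 2 ≤ n)
    (q τν γ ρ : ℝ) (hq : 0 < q) (hτν : 0 < τν)
    (lam : Fin n → ℝ) (hmono : Monotone lam)
    (hlam0 : lam ⟨0, by omega⟩ = 0) (hlam1 : 0 < lam ⟨1, by omega⟩)
    (hγl : 1 / Real.sqrt (2 * τν) < γ)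
    (hγu : γ < Real.sqrt n / Real.sqrt (2 * τν))
    (hρ : ρ ≥ q / lam ⟨1, by omega⟩ *
      (((n : ℝ) - 2 * τν * γ ^ 2) / (2 * τν * γ ^ 2 - 1))) :
    1 / (2 * τν) *
        (1 + ∑ i ∈ Finset.univ.erase (⟨0, by omega⟩ : Fin n),
          q / (q + ρ * lam i)) ≤ γ ^ 2 := by
  set l2 := lam ⟨1, by omega⟩ with hl2def
  set A := 2 * τν * γ ^ 2 with hAdef
  have hs : (0:ℝ) < 2 * τν := by linarith
  have hsp : 0 < Real.sqrt (2 * τν) := Real.sqrt_pos.mpr hs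
  have hss : Real.sqrt (2 * τν) ^ 2 = 2 * τν := Real.sq_sqrt hs.le
  have hA1 : 1 < A := by
    have h1 : 1 < γ * Real.sqrt (2 * τν) := by
      rw [div_lt_iff₀ hsp] at hγl; linarith
    nlinarith
  have hγpos : 0 < γ := lt_trans (by positivity) hγl
  have hAn : A < (n : ℝ) := by
    have h2 : γ * Real.sqrt (2 * τν) < Real.sqrt n := by
      rw [lt_div_iff₀ hsp] at hγu; linarith
    have hnn : Real.sqrt (n : ℝ) ^ 2 = (n : ℝ) := Real.sq_sqrt (by positivity)
    nlinarith [mul_pos hγpos hsp]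
  have hρpos : 0 < ρ := by
    refine lt_of_lt_of_le ?_ hρ
    exact mul_pos (div_pos hq hlam1) (div_pos (by linarith) (by linarith))
  have hden2 : 0 < q + ρ * l2 := by positivity
  have hn1 : (0:ℝ) < (n : ℝ) - 1 := by
    have : (2:ℝ) ≤ (n:ℝ) := by exact_mod_cast hn
    linarith
  -- key bound from hρ
  have h3 : q * ((n:ℝ) - A) ≤ ρ * l2 * (A - 1) := by
    have h1 := hρ
    rw [ge_iff_le, div_mul_eq_mul_div, div_le_iff₀ hlam1] at h1
    rw [← mul_div_assoc, div_le_iff₀ (by linarith : (0:ℝ) < A - 1)] at h1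
    linarith
  have hfrac : q / (q + ρ * l2) ≤ (A - 1) / ((n:ℝ) - 1) := by
    rw [div_le_div_iff₀ hden2 hn1]
    nlinarith
  have hsum : (∑ i ∈ Finset.univ.erase (⟨0, by omega⟩ : Fin n),
      q / (q + ρ * lam i)) ≤ ((n : ℝ) - 1) * ((A - 1) / ((n:ℝ) - 1)) := by
    have hcard : (Finset.univ.erase (⟨0, by omega⟩ : Fin n)).card = n - 1 := by
      rw [Finset.card_erase_of_mem (Finset.mem_univ _), Finset.card_univ, Fintype.card_fin]
    have hb : ∀ i ∈ Finset.univ.erase (⟨0, by omega⟩ : Fin n),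
        q / (q + ρ * lam i) ≤ (A - 1) / ((n:ℝ) - 1) := by
      intro i hi
      have hi0 : i ≠ (⟨0, by omega⟩ : Fin n) := Finset.ne_of_mem_erase hi
      have hle : l2 ≤ lam i := by
        apply hmono
        rw [Fin.le_def]
        have : i.val ≠ 0 := fun h => hi0 (Fin.ext h)
        simpa using Nat.one_le_iff_ne_zero.mpr this
      have hdeni : 0 < q + ρ * lam i := by nlinarith
      refine le_trans ?_ hfrac
      gcongr
    have := Finset.sum_le_card_nsmul _ _ _ hb
    rw [hcard] at this
    calc (∑ i ∈ Finset.univ.erase (⟨0, by omega⟩ : Fin n), q / (q + ρ * lam i))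
        ≤ (n - 1) • ((A - 1) / ((n:ℝ) - 1)) := this
      _ = ((n : ℝ) - 1) * ((A - 1) / ((n:ℝ) - 1)) := by
          rw [nsmul_eq_mul]
          congr 1
          have : (1:ℕ) ≤ n := by omega
          push_cast [Nat.cast_sub this]
          ring
  have hsimp : ((n : ℝ) - 1) * ((A - 1) / ((n:ℝ) - 1)) = A - 1 := by
    field_simp
  rw [hsimp] at hsum
  have h4 : 1 / (2 * τν) * (1 + ∑ i ∈ Finset.univ.erase (⟨0, by omega⟩ : Fin n),
      q / (q + ρ * lam i)) ≤ 1 / (2 * τν) * A :=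
    mul_le_mul_of_nonneg_left (by linarith) (by positivity)
  refine h4.trans (le_of_eq ?_)
  rw [hAdef]
  field_simp
end
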